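/- arXiv:1411.4669 — 5 statements merged into one kernel-verified Lean document; each statement's English description precedes it below -/
import Mathlib

section
/- Let g : ℝ → ℝ be continuous and 1-periodic, and let σ : ℝ → ℝ be C¹ and 1-periodic. Then there exists t ∈ [0,1] with |g(t)| ≤ ( ∫₀¹ |σ'(t) − g(t)|² dt )^{1/2}; equivalently, min_{t ∈ [0,1]} |g(t)| ≤ ‖σ' − g‖_{L²(0,1)}. -/
open MeasureTheory intervalIntegral

/-- For a continuous 1-periodic `g` and a `C¹` 1-periodic `σ`, the minimum of `|g|`
on `[0,1]` is bounded by the `L²(0,1)` norm of `σ' − g`. -/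
theorem min_abs_le_L2_norm
    (g σ σ' : ℝ → ℝ)
    (hg : Continuous g)
    (hgper : ∀ t, g (t + 1) = g t)
    (hσ : ∀ t, HasDerivAt σ (σ' t) t)
    (hσ' : Continuous σ')
    (hσper : ∀ t, σ (t + 1) = σ t) :
    ∃ t ∈ Set.Icc (0 : ℝ) 1,
      |g t| ≤ Real.sqrt (∫ s in (0:ℝ)..1, (σ' s - g s) ^ 2) := by
  by_cases hzero : ∃ t ∈ Set.Icc (0 : ℝ) 1, g t = 0
  · obtain ⟨t, ht, hgt⟩ := hzero
    exact ⟨t, ht, by simp [hgt, Real.sqrt_nonneg]⟩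
  push_neg at hzero
  set f : ℝ → ℝ := fun t => σ' t - g t with hf
  have hfc : Continuous f := hσ'.sub hg
  have hFTC : ∫ s in (0:ℝ)..1, σ' s = 0 := by
    rw [intervalIntegral.integral_eq_sub_of_hasDerivAt (fun t _ => hσ t)
      (hσ'.intervalIntegrable 0 1)]
    have : σ 1 = σ 0 := by simpa using hσper 0
    simp [this]
  set c : ℝ := ∫ s in (0:ℝ)..1, g s with hc
  have hcf : ∫ s in (0:ℝ)..1, f s = -c := by
    rw [hf]
    rw [intervalIntegral.integral_sub (hσ'.intervalIntegrable 0 1)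
      (hg.intervalIntegrable 0 1), hFTC]
    ring
  -- Cauchy–Schwarz via nonnegativity of ∫ (f + c)²
  have hCS : c ^ 2 ≤ ∫ s in (0:ℝ)..1, f s ^ 2 := by
    have h0 : (0:ℝ) ≤ ∫ s in (0:ℝ)..1, (f s + c) ^ 2 :=
      intervalIntegral.integral_nonneg (by norm_num) (fun t _ => sq_nonneg _)
    have hexp : ∫ s in (0:ℝ)..1, (f s + c) ^ 2
        = (∫ s in (0:ℝ)..1, f s ^ 2) - c ^ 2 := by
      have heq : ∀ s, (f s + c) ^ 2 = f s ^ 2 + (2 * c * f s + c ^ 2) := fun s => by ring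
      simp_rw [heq]
      rw [intervalIntegral.integral_add (f := fun s => f s ^ 2) (g := fun s => 2 * c * f s + c ^ 2) ((hfc.pow 2).intervalIntegrable 0 1)
        (((continuous_const.mul hfc).add continuous_const).intervalIntegrable 0 1),
        intervalIntegral.integral_add (f := fun s => 2 * c * f s) (g := fun _ => c ^ 2) ((continuous_const.mul hfc).intervalIntegrable 0 1)
        (intervalIntegrable_const),
        intervalIntegral.integral_const_mul, hcf]
      simp
      ring
    linarith [hexp ▸ h0]
  have habs : |c| ≤ Real.sqrt (∫ s in (0:ℝ)..1, f s ^ 2) := by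
    apply Real.abs_le_sqrt
    simpa using hCS
  -- constant sign
  have hsign : (∀ t ∈ Set.Icc (0:ℝ) 1, 0 < g t) ∨ (∀ t ∈ Set.Icc (0:ℝ) 1, g t < 0) := by
    rcases lt_or_gt_of_ne (hzero 0 (by norm_num)) with h0 | h0
    · right
      intro t ht
      by_contra hle
      push_neg at hle
      have hlt : 0 < g t := lt_of_le_of_ne hle (Ne.symm (hzero t ht))
      have : (0:ℝ) ∈ g '' Set.Icc 0 t :=
        intermediate_value_Icc ht.1 (hg.continuousOn) ⟨le_of_lt h0, le_of_lt hlt⟩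
      obtain ⟨s, hs, hgs⟩ := this
      exact hzero s ⟨hs.1, le_trans hs.2 ht.2⟩ hgs
    · left
      intro t ht
      by_contra hle
      push_neg at hle
      have hlt : g t < 0 := lt_of_le_of_ne hle (hzero t ht)
      have : (0:ℝ) ∈ g '' Set.Icc 0 t :=
        intermediate_value_Icc' ht.1 (hg.continuousOn) ⟨le_of_lt hlt, le_of_lt h0⟩
      obtain ⟨s, hs, hgs⟩ := this
      exact hzero s ⟨hs.1, le_trans hs.2 ht.2⟩ hgs
  rcases hsign with hpos | hneg
  · obtain ⟨t₀, ht₀, hmin⟩ := isCompact_Icc.exists_isMinOn (Set.nonempty_Icc.2 (by norm_num))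
      (hg.continuousOn : ContinuousOn g (Set.Icc (0:ℝ) 1))
    refine ⟨t₀, ht₀, ?_⟩
    have h1 : g t₀ ≤ c := by
      have := intervalIntegral.integral_mono_on (by norm_num : (0:ℝ) ≤ 1)
        (_root_.intervalIntegrable_const (μ := volume) (c := g t₀)) (hg.intervalIntegrable 0 1)
        (fun s hs => hmin hs)
      simpa using this
    have h2 : |g t₀| = g t₀ := abs_of_pos (hpos t₀ ht₀)
    calc |g t₀| ≤ c := by rw [h2]; exact h1
      _ ≤ |c| := le_abs_self c
      _ ≤ _ := habs
  · obtain ⟨t₀, ht₀, hmax⟩ := isCompact_Icc.exists_isMaxOn (Set.nonempty_Icc.2 (by norm_num))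
      (hg.continuousOn : ContinuousOn g (Set.Icc (0:ℝ) 1))
    refine ⟨t₀, ht₀, ?_⟩
    have h1 : c ≤ g t₀ := by
      have := intervalIntegral.integral_mono_on (by norm_num : (0:ℝ) ≤ 1)
        (hg.intervalIntegrable 0 1) (_root_.intervalIntegrable_const (μ := volume) (c := g t₀))
        (fun s hs => hmax hs)
      simpa using this
    have h2 : |g t₀| = -g t₀ := abs_of_neg (hneg t₀ ht₀)
    calc |g t₀| = -g t₀ := h2
      _ ≤ -c := by linarith
      _ ≤ |c| := neg_le_abs c
      _ ≤ _ := habs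
end

section
/- Fix n ≥ 1 and let E = ℂⁿ with real inner product ⟨u,v⟩ = Re ∑ₖ uₖ·conj(vₖ) and norm ‖·‖. Let H : E → ℝ be C¹ with ‖∇H(x)‖ ≤ C_X for all x ∈ E, where C_X > 0, and let h > 0. Let x : ℝ → E and τ, σ : ℝ → ℝ be C¹ and 1-periodic, and set G := ( ∫₀¹ ‖x'(t) − τ(t)·i·∇H(x(t))‖² dt + ∫₀¹ |σ'(t) − H(x(t))|² dt + ∫₀¹ |τ'(t)|² dt )^{1/2}. If G < (h/2)·min(1/C_X, 1), then |H(x(t))| < h for all t ∈ ℝ. -/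
open MeasureTheory intervalIntegral

/-- The continuous real-linear functional `v ↦ Re ⟪y, v⟫ = Re ∑ₖ yₖ·conj(vₖ)` on
`ℂⁿ`, i.e. the real inner product with `y`. -/
noncomputable def realInnerCLM {n : ℕ} (y : EuclideanSpace ℂ (Fin n)) :
    EuclideanSpace ℂ (Fin n) →L[ℝ] ℝ :=
  Complex.reCLM.comp ((innerSL ℂ y).restrictScalars ℝ)

lemma realInnerCLM_apply {n : ℕ} (y v : EuclideanSpace ℂ (Fin n)) :
    realInnerCLM y v = (inner ℂ y v : ℂ).re := rfl

/-- Cauchy–Schwarz on the unit interval: `∫₀¹ u ≤ √(∫₀¹ u²)`. -/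
lemma l1_le_l2_sqrt (u : ℝ → ℝ) (hu : Continuous u) :
    (∫ t in (0:ℝ)..1, u t) ≤ Real.sqrt (∫ t in (0:ℝ)..1, (u t) ^ 2) := by
  set c := ∫ t in (0:ℝ)..1, u t with hc
  have hint : IntervalIntegrable u volume 0 1 := hu.intervalIntegrable 0 1
  have hint2 : IntervalIntegrable (fun t => (u t) ^ 2) volume 0 1 :=
    (hu.pow 2).intervalIntegrable 0 1
  have hintc : IntervalIntegrable (fun t => (2 * c) * u t) volume 0 1 :=
    (continuous_const.mul hu).intervalIntegrable 0 1
  have key : 0 ≤ ∫ t in (0:ℝ)..1, (u t - c) ^ 2 :=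
    intervalIntegral.integral_nonneg (by norm_num) fun t _ => sq_nonneg _
  have expand : (∫ t in (0:ℝ)..1, (u t - c) ^ 2)
      = (∫ t in (0:ℝ)..1, (u t) ^ 2) - c ^ 2 := by
    have h1 : ∀ t, (u t - c) ^ 2 = ((u t) ^ 2 - (2 * c) * u t) + c ^ 2 := by
      intro t; ring
    simp_rw [h1]
    rw [intervalIntegral.integral_add (hint2.sub hintc) intervalIntegrable_const,
      intervalIntegral.integral_sub hint2 hintc, intervalIntegral.integral_const_mul,
      intervalIntegral.integral_const, ← hc]
    simp; ring
  have hsq : c ^ 2 ≤ ∫ t in (0:ℝ)..1, (u t) ^ 2 := by linarith [expand ▸ key]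
  calc c ≤ |c| := le_abs_self _
    _ = Real.sqrt (c ^ 2) := (Real.sqrt_sq_eq_abs c).symm
    _ ≤ Real.sqrt (∫ t in (0:ℝ)..1, (u t) ^ 2) := Real.sqrt_le_sqrt hsq

/-- Lemma 3.1 of the paper (flat model): a 1-periodic loop `(x,τ,σ)` at which the
gradient of the extended action functional has small `L²` norm stays within the
energy window `|H| < h`. -/
theorem small_gradient_small_H
    (n : ℕ) (hn : 1 ≤ n)
    (H : EuclideanSpace ℂ (Fin n) → ℝ)
    (g : EuclideanSpace ℂ (Fin n) → EuclideanSpace ℂ (Fin n))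
    (hH : ∀ x, HasFDerivAt H (realInnerCLM (g x)) x)
    (hg : Continuous g)
    (C_X : ℝ) (hCX : 0 < C_X) (hgb : ∀ x, ‖g x‖ ≤ C_X)
    (h : ℝ) (hh : 0 < h)
    (x : ℝ → EuclideanSpace ℂ (Fin n)) (dx : ℝ → EuclideanSpace ℂ (Fin n))
    (τ σ dτ dσ : ℝ → ℝ)
    (hx : ∀ t, HasDerivAt x (dx t) t) (hdx : Continuous dx)
    (hτ : ∀ t, HasDerivAt τ (dτ t) t) (hdτ : Continuous dτ)
    (hσ : ∀ t, HasDerivAt σ (dσ t) t) (hdσ : Continuous dσ)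
    (hxper : ∀ t, x (t + 1) = x t)
    (hτper : ∀ t, τ (t + 1) = τ t)
    (hσper : ∀ t, σ (t + 1) = σ t)
    (hG : Real.sqrt
        ((∫ t in (0:ℝ)..1, ‖dx t - τ t • (Complex.I • g (x t))‖ ^ 2) +
         (∫ t in (0:ℝ)..1, (dσ t - H (x t)) ^ 2) +
         (∫ t in (0:ℝ)..1, (dτ t) ^ 2))
      < (h / 2) * min (1 / C_X) 1) :
    ∀ t, |H (x t)| < h := by
  -- notation
  set e : ℝ → EuclideanSpace ℂ (Fin n) :=
    fun t => dx t - τ t • (Complex.I • g (x t)) with he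
  set f : ℝ → ℝ := fun t => H (x t) with hf
  set φ : ℝ → ℝ := fun t => realInnerCLM (g (x t)) (dx t) with hφ
  -- continuity facts
  have hxc : Continuous x := continuous_iff_continuousAt.mpr fun t => (hx t).continuousAt
  have hτc : Continuous τ := continuous_iff_continuousAt.mpr fun t => (hτ t).continuousAt
  have hHc : Continuous H := continuous_iff_continuousAt.mpr fun y =>
    (hH y).differentiableAt.continuousAt
  have hfc : Continuous f := hHc.comp hxc
  have hec : Continuous e := hdx.sub (hτc.smul ((hg.comp hxc).const_smul Complex.I))
  have hφc : Continuous φ := by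
    have : Continuous fun t => (inner ℂ (g (x t)) (dx t) : ℂ) :=
      (hg.comp hxc).inner hdx
    simpa only [hφ, realInnerCLM_apply, Function.comp_def] using Complex.continuous_re.comp this
  -- derivative of f
  have hfd : ∀ t, HasDerivAt f (φ t) t := fun t => (hH (x t)).comp_hasDerivAt t (hx t)
  -- pointwise bound on φ
  have hbound : ∀ t, |φ t| ≤ C_X * ‖e t‖ := by
    intro t
    have hzero : realInnerCLM (g (x t)) (Complex.I • g (x t)) = 0 := by
      rw [realInnerCLM_apply, inner_smul_right, inner_self_eq_norm_sq_to_K]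
      simp [Complex.mul_re, ← Complex.ofReal_pow]
    have hsplit : dx t = e t + τ t • (Complex.I • g (x t)) := by simp [he]
    have h1 : φ t = (inner ℂ (g (x t)) (e t) : ℂ).re := by
      show realInnerCLM (g (x t)) (dx t) = _
      rw [hsplit, (realInnerCLM (g (x t))).map_add, (realInnerCLM (g (x t))).map_smul, hzero]
      simp [realInnerCLM_apply]
    rw [h1]
    calc |(inner ℂ (g (x t)) (e t) : ℂ).re| ≤ ‖(inner ℂ (g (x t)) (e t) : ℂ)‖ :=
          Complex.abs_re_le_norm _
      _ ≤ ‖g (x t)‖ * ‖e t‖ := norm_inner_le_norm _ _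
      _ ≤ C_X * ‖e t‖ := mul_le_mul_of_nonneg_right (hgb _) (norm_nonneg _)
  -- the three integrals and their nonnegativity
  set A := ∫ t in (0:ℝ)..1, ‖e t‖ ^ 2 with hA
  set B := ∫ t in (0:ℝ)..1, (dσ t - f t) ^ 2 with hB
  set C := ∫ t in (0:ℝ)..1, (dτ t) ^ 2 with hC
  have hA0 : 0 ≤ A := intervalIntegral.integral_nonneg (by norm_num)
    fun t _ => pow_nonneg (norm_nonneg _) 2
  have hB0 : 0 ≤ B := intervalIntegral.integral_nonneg (by norm_num) fun t _ => sq_nonneg _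
  have hC0 : 0 ≤ C := intervalIntegral.integral_nonneg (by norm_num) fun t _ => sq_nonneg _
  set Gv := Real.sqrt (A + B + C) with hGv
  have hGA : Real.sqrt A ≤ Gv := Real.sqrt_le_sqrt (by linarith)
  have hGB : Real.sqrt B ≤ Gv := Real.sqrt_le_sqrt (by linarith)
  have hGsmall : Gv < (h / 2) * min (1 / C_X) 1 := hG
  -- ∫₀¹ |φ| ≤ C_X √A
  have hφint : (∫ u in (0:ℝ)..1, |φ u|) ≤ C_X * Real.sqrt A := by
    calc (∫ u in (0:ℝ)..1, |φ u|) ≤ ∫ u in (0:ℝ)..1, C_X * ‖e u‖ :=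
          intervalIntegral.integral_mono_on (by norm_num)
            (hφc.abs.intervalIntegrable 0 1)
            ((continuous_const.mul hec.norm).intervalIntegrable 0 1)
            (fun u _ => hbound u)
      _ = C_X * ∫ u in (0:ℝ)..1, ‖e u‖ := intervalIntegral.integral_const_mul _ _
      _ ≤ C_X * Real.sqrt (∫ u in (0:ℝ)..1, ‖e u‖ ^ 2) :=
          mul_le_mul_of_nonneg_left (l1_le_l2_sqrt _ hec.norm) hCX.le
      _ = C_X * Real.sqrt A := rfl
  -- |∫₀¹ f| ≤ √B
  set M := ∫ t in (0:ℝ)..1, f t with hM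
  have hMB : |M| ≤ Real.sqrt B := by
    have hσeq : (∫ t in (0:ℝ)..1, dσ t) = σ 1 - σ 0 :=
      intervalIntegral.integral_eq_sub_of_hasDerivAt (fun t _ => hσ t)
        (hdσ.intervalIntegrable 0 1)
    have hσ10 : σ 1 = σ 0 := by simpa using hσper 0
    have hsub : (∫ t in (0:ℝ)..1, (dσ t - f t)) = -M := by
      rw [intervalIntegral.integral_sub (hdσ.intervalIntegrable 0 1)
        (hfc.intervalIntegrable 0 1), hσeq, hσ10, ← hM]; ring
    calc |M| = |∫ t in (0:ℝ)..1, (dσ t - f t)| := by rw [hsub, abs_neg]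
      _ ≤ ∫ t in (0:ℝ)..1, |dσ t - f t| :=
          intervalIntegral.abs_integral_le_integral_abs (by norm_num)
      _ ≤ Real.sqrt (∫ t in (0:ℝ)..1, |dσ t - f t| ^ 2) :=
          l1_le_l2_sqrt _ (hdσ.sub hfc).abs
      _ = Real.sqrt B := by simp_rw [sq_abs]; rfl
  -- a point where f equals its mean
  obtain ⟨s₀, hs₀mem, hs₀⟩ := isCompact_Icc.exists_isMinOn (Set.nonempty_Icc.mpr one_pos.le)
    hfc.continuousOn
  obtain ⟨s₁, hs₁mem, hs₁⟩ := isCompact_Icc.exists_isMaxOn (Set.nonempty_Icc.mpr one_pos.le)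
    hfc.continuousOn
  rw [isMinOn_iff] at hs₀
  rw [isMaxOn_iff] at hs₁
  have hlow : f s₀ ≤ M := by
    calc f s₀ = ∫ t in (0:ℝ)..1, f s₀ := by simp
      _ ≤ M := intervalIntegral.integral_mono_on (by norm_num) intervalIntegrable_const
          (hfc.intervalIntegrable 0 1) (fun u hu => hs₀ u hu)
  have hhigh : M ≤ f s₁ := by
    calc M ≤ ∫ t in (0:ℝ)..1, f s₁ := intervalIntegral.integral_mono_on (by norm_num)
          (hfc.intervalIntegrable 0 1) intervalIntegrable_const (fun u hu => hs₁ u hu)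
      _ = f s₁ := by simp
  have hMuIcc : M ∈ Set.uIcc (f s₀) (f s₁) := Set.mem_uIcc.mpr (Or.inl ⟨hlow, hhigh⟩)
  obtain ⟨s, hsmem', hfs⟩ := intermediate_value_uIcc
    (hfc.continuousOn.mono ((Set.ordConnected_Icc).uIcc_subset hs₀mem hs₁mem)) hMuIcc
  have hsmem : s ∈ Set.Icc (0:ℝ) 1 := (Set.ordConnected_Icc).uIcc_subset hs₀mem hs₁mem hsmem'
  -- main bound on Icc 0 1
  have hmain : ∀ t ∈ Set.Icc (0:ℝ) 1, |f t| < h := by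
    intro t ht
    have hdiff : f t - f s = ∫ u in s..t, φ u :=
      (intervalIntegral.integral_eq_sub_of_hasDerivAt (fun u _ => hfd u)
        (hφc.intervalIntegrable s t)).symm
    have hφabs : |f t - f s| ≤ ∫ u in (0:ℝ)..1, |φ u| := by
      rw [hdiff]
      rcases le_total s t with hst | hst
      · calc |∫ u in s..t, φ u| ≤ ∫ u in s..t, |φ u| :=
              intervalIntegral.abs_integral_le_integral_abs hst
          _ ≤ ∫ u in (0:ℝ)..1, |φ u| := intervalIntegral.integral_mono_interval
              hsmem.1 hst ht.2 (Filter.Eventually.of_forall fun u => abs_nonneg _)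
              (hφc.abs.intervalIntegrable 0 1)
      · calc |∫ u in s..t, φ u| = |∫ u in t..s, φ u| := by
              rw [intervalIntegral.integral_symm, abs_neg]
          _ ≤ ∫ u in t..s, |φ u| := intervalIntegral.abs_integral_le_integral_abs hst
          _ ≤ ∫ u in (0:ℝ)..1, |φ u| := intervalIntegral.integral_mono_interval
              ht.1 hst hsmem.2 (Filter.Eventually.of_forall fun u => abs_nonneg _)
              (hφc.abs.intervalIntegrable 0 1)
    have h1 : |f t| ≤ |f s| + |f t - f s| := by
      have := abs_add_le (f s) (f t - f s)
      simpa using this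
    have h2 : |f t| ≤ (1 + C_X) * Gv := by
      have hfs' : |f s| ≤ Gv := by rw [hfs]; exact hMB.trans hGB
      have hft' : |f t - f s| ≤ C_X * Gv :=
        hφabs.trans (hφint.trans (mul_le_mul_of_nonneg_left hGA hCX.le))
      calc |f t| ≤ |f s| + |f t - f s| := h1
        _ ≤ Gv + C_X * Gv := add_le_add hfs' hft'
        _ = (1 + C_X) * Gv := by ring
    have h3 : (1 + C_X) * Gv < (1 + C_X) * ((h / 2) * min (1 / C_X) 1) :=
      mul_lt_mul_of_pos_left hGsmall (by linarith)
    have h4 : (1 + C_X) * ((h / 2) * min (1 / C_X) 1) ≤ h := by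
      set m := min (1 / C_X) 1 with hm
      have hm1 : m ≤ 1 := min_le_right _ _
      have hm2 : C_X * m ≤ 1 := by
        have hmle : m ≤ 1 / C_X := min_le_left _ _
        calc C_X * m ≤ C_X * (1 / C_X) := mul_le_mul_of_nonneg_left hmle hCX.le
          _ = 1 := by field_simp
      nlinarith [hh.le]
    linarith
  -- reduce general t to Icc 0 1 by periodicity
  intro t0
  have hper : Function.Periodic f 1 := fun t => congrArg H (hxper t)
  have hredux : f t0 = f (Int.fract t0) := by
    have h5 := hper.sub_int_mul_eq (x := t0) ⌊t0⌋
    rw [mul_one, Int.self_sub_floor] at h5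
    exact h5.symm
  have hfract : Int.fract t0 ∈ Set.Icc (0:ℝ) 1 :=
    ⟨Int.fract_nonneg t0, (Int.fract_lt_one t0).le⟩
  have hfin : |f t0| < h := by rw [hredux]; exact hmain _ hfract
  simpa [hf] using hfin
end

section
/- Fix n ≥ 1 and let E = ℂⁿ with real inner product ⟨u,v⟩ = Re ∑ₖ uₖ·conj(vₖ) and norm ‖·‖. Assume: H : E → ℝ is C¹ with ‖∇H(x)‖ ≤ C_X for all x, where C_X > 0; α₀ > 0 and 0 < h ≤ α₀/3; λ assigns to each x ∈ E a continuous real-linear functional λ_x : E → ℝ; on the set N := {x ∈ E : |H(x)| ≤ h} one has λ_x(i·∇H(x)) − H(x) ≥ α₀/3 and ‖λ_x‖ ≤ B_λ (operator norm) for some B_λ ≥ 0. Let A, S ∈ ℝ and let x : ℝ → E, τ, σ : ℝ → ℝ be C¹ and 1-periodic such that: (a) G := ( ∫₀¹ ‖x' − τ·i·∇H(x)‖² dt + ∫₀¹ |σ' − H(x)|² dt + ∫₀¹ |τ'|² dt )^{1/2} < (h/2)·min(1/C_X, 1); (b) | ∫₀¹ λ_{x(t)}(x'(t)) dt − ∫₀¹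 σ(t)·τ'(t) dt − ∫₀¹ τ(t)·H(x(t)) dt | ≤ A; (c) ( ∫₀¹ |σ(t) − σ̂|² dt )^{1/2} ≤ S, where σ̂ := ∫₀¹ σ(t) dt. Then |τ(t)| ≤ (3/α₀)·(A + α₀·S + B) + α₀ for all t ∈ ℝ, where B := h·B_λ/(2·C_X). -/
open MeasureTheory intervalIntegral

lemma per_fract {β : Type*} {f : ℝ → β} (hf : ∀ t, f (t + 1) = f t) (t : ℝ) :
    f (Int.fract t) = f t := by
  have hper : Function.Periodic f 1 := hf
  have h := hper.sub_int_mul_eq (x := t) (n := ⌊t⌋)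
  rw [mul_one] at h
  rw [Int.fract]
  exact h

lemma contIntOn (f : ℝ → ℝ) (hf : Continuous f) :
    IntegrableOn f (Set.Ioc (0:ℝ) 1) volume :=
  (hf.integrableOn_Icc (a := 0) (b := 1)).mono_set Set.Ioc_subset_Icc_self

lemma cs_aux (f g : ℝ → ℝ) (hf : Continuous f) (hg : Continuous g) :
    (∫ t in (0:ℝ)..1, |f t| * |g t|) ≤
      Real.sqrt (∫ t in (0:ℝ)..1, f t ^ 2) * Real.sqrt (∫ t in (0:ℝ)..1, g t ^ 2) := by
  have h01 : (0:ℝ) ≤ 1 := zero_le_one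
  have habs : ∀ (y : ℝ), |y| ^ (2:ℝ) = y ^ 2 := by
    intro y
    rw [show (2:ℝ) = ((2:ℕ):ℝ) by norm_num, Real.rpow_natCast, sq_abs]
  have hpq : Real.HolderConjugate 2 2 := ⟨by norm_num, by norm_num, by norm_num⟩
  have h2 : (ENNReal.ofReal (2:ℝ)) = 2 := by simp [ENNReal.ofReal_ofNat]
  have memf : MemLp (fun t => |f t|) (ENNReal.ofReal (2:ℝ))
      (volume.restrict (Set.Ioc (0:ℝ) 1)) := by
    rw [h2]
    refine (memLp_two_iff_integrable_sq (hf.abs.aestronglyMeasurable.restrict)).2 ?_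
    exact contIntOn _ ((hf.abs).pow 2)
  have memg : MemLp (fun t => |g t|) (ENNReal.ofReal (2:ℝ))
      (volume.restrict (Set.Ioc (0:ℝ) 1)) := by
    rw [h2]
    refine (memLp_two_iff_integrable_sq (hg.abs.aestronglyMeasurable.restrict)).2 ?_
    exact contIntOn _ ((hg.abs).pow 2)
  have key := integral_mul_le_Lp_mul_Lq_of_nonneg (μ := volume.restrict (Set.Ioc (0:ℝ) 1)) hpq
    (ae_of_all _ fun t => abs_nonneg (f t)) (ae_of_all _ fun t => abs_nonneg (g t)) memf memg
  rw [intervalIntegral.integral_of_le h01, intervalIntegral.integral_of_le h01,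
    intervalIntegral.integral_of_le h01]
  calc ∫ t in Set.Ioc (0:ℝ) 1, |f t| * |g t| ≤
      (∫ t in Set.Ioc (0:ℝ) 1, |f t| ^ (2:ℝ)) ^ (1/(2:ℝ)) *
      (∫ t in Set.Ioc (0:ℝ) 1, |g t| ^ (2:ℝ)) ^ (1/(2:ℝ)) := key
    _ = Real.sqrt (∫ t in Set.Ioc (0:ℝ) 1, f t ^ 2) *
        Real.sqrt (∫ t in Set.Ioc (0:ℝ) 1, g t ^ 2) := by
      simp only [habs, Real.sqrt_eq_rpow]

lemma l1_le_l2 (f : ℝ → ℝ) (hf : Continuous f) :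
    (∫ t in (0:ℝ)..1, |f t|) ≤ Real.sqrt (∫ t in (0:ℝ)..1, f t ^ 2) := by
  have := cs_aux f (fun _ => 1) hf continuous_const
  simpa using this

lemma ftc_bound {f f' : ℝ → ℝ} (hf : ∀ t, HasDerivAt f (f' t) t) (hf' : Continuous f')
    {s t : ℝ} (hs : s ∈ Set.Icc (0:ℝ) 1) (ht : t ∈ Set.Icc (0:ℝ) 1) :
    |f t - f s| ≤ ∫ u in (0:ℝ)..1, |f' u| := by
  wlog hst : s ≤ t generalizing s t
  · rw [abs_sub_comm]
    exact this ht hs (le_of_not_ge hst)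
  have heq : ∫ u in s..t, f' u = f t - f s :=
    intervalIntegral.integral_eq_sub_of_hasDerivAt (fun u _ => hf u)
      (hf'.intervalIntegrable s t)
  rw [← heq]
  calc |∫ u in s..t, f' u| ≤ ∫ u in s..t, |f' u| :=
        intervalIntegral.abs_integral_le_integral_abs hst
    _ ≤ ∫ u in (0:ℝ)..1, |f' u| := by
        apply intervalIntegral.integral_mono_interval hs.1 hst ht.2
          (ae_of_all _ fun u => abs_nonneg (f' u)) (hf'.abs.intervalIntegrable 0 1)

lemma realInnerCLM_I_self {n : ℕ} (y : EuclideanSpace ℂ (Fin n)) :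
    realInnerCLM y (Complex.I • y) = 0 := by
  show (inner ℂ y (Complex.I • y) : ℂ).re = 0
  rw [inner_smul_right]
  simp [Complex.mul_re]
  rw [← Complex.ofReal_pow, Complex.ofReal_im]

lemma realInnerCLM_abs_le {n : ℕ} (y v : EuclideanSpace ℂ (Fin n)) :
    |realInnerCLM y v| ≤ ‖y‖ * ‖v‖ := by
  calc |realInnerCLM y v| = |(inner ℂ y v : ℂ).re| := rfl
    _ ≤ ‖(inner ℂ y v : ℂ)‖ := Complex.abs_re_le_norm _
    _ = ‖(inner ℂ y v : ℂ)‖ := rfl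
    _ ≤ ‖y‖ * ‖v‖ := norm_inner_le_norm y v

set_option maxHeartbeats 1000000 in
/-- Lemma 3.2 of the paper (flat model): an a priori uniform bound on the Lagrange
multiplier `τ` for 1-periodic loops `(x,τ,σ)` with small action-gradient, bounded
action, and controlled oscillation of `σ`. -/
theorem uniform_bound_on_tau
    (n : ℕ) (hn : 1 ≤ n)
    (H : EuclideanSpace ℂ (Fin n) → ℝ)
    (g : EuclideanSpace ℂ (Fin n) → EuclideanSpace ℂ (Fin n))
    (hH : ∀ x, HasFDerivAt H (realInnerCLM (g x)) x)
    (hg : Continuous g)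
    (C_X : ℝ) (hCX : 0 < C_X) (hgb : ∀ x, ‖g x‖ ≤ C_X)
    (α₀ : ℝ) (hα₀ : 0 < α₀)
    (h : ℝ) (hh : 0 < h) (hhα : h ≤ α₀ / 3)
    (lam : EuclideanSpace ℂ (Fin n) → (EuclideanSpace ℂ (Fin n) →L[ℝ] ℝ))
    (B_lam : ℝ) (hBlam : 0 ≤ B_lam)
    (hcontact : ∀ x, |H x| ≤ h → α₀ / 3 ≤ lam x (Complex.I • g x) - H x)
    (hlamb : ∀ x, |H x| ≤ h → ‖lam x‖ ≤ B_lam)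
    (A S : ℝ)
    (x : ℝ → EuclideanSpace ℂ (Fin n)) (dx : ℝ → EuclideanSpace ℂ (Fin n))
    (τ σ dτ dσ : ℝ → ℝ)
    (hx : ∀ t, HasDerivAt x (dx t) t) (hdx : Continuous dx)
    (hτ : ∀ t, HasDerivAt τ (dτ t) t) (hdτ : Continuous dτ)
    (hσ : ∀ t, HasDerivAt σ (dσ t) t) (hdσ : Continuous dσ)
    (hxper : ∀ t, x (t + 1) = x t)
    (hτper : ∀ t, τ (t + 1) = τ t)
    (hσper : ∀ t, σ (t + 1) = σ t)
    (hlamcont : Continuous fun t => lam (x t) (dx t))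
    (hG : Real.sqrt
        ((∫ t in (0:ℝ)..1, ‖dx t - τ t • (Complex.I • g (x t))‖ ^ 2) +
         (∫ t in (0:ℝ)..1, (dσ t - H (x t)) ^ 2) +
         (∫ t in (0:ℝ)..1, (dτ t) ^ 2))
      < (h / 2) * min (1 / C_X) 1)
    (hA : |(∫ t in (0:ℝ)..1, lam (x t) (dx t)) -
           (∫ t in (0:ℝ)..1, σ t * dτ t) -
           (∫ t in (0:ℝ)..1, τ t * H (x t))| ≤ A)
    (hS : Real.sqrt (∫ t in (0:ℝ)..1, (σ t - ∫ r in (0:ℝ)..1, σ r) ^ 2) ≤ S) :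
    ∀ t, |τ t| ≤ (3 / α₀) * (A + α₀ * S + h * B_lam / (2 * C_X)) + α₀ := by
  have h01 : (0:ℝ) ≤ 1 := zero_le_one
  -- continuity
  have cx : Continuous x := continuous_iff_continuousAt.2 fun t => (hx t).continuousAt
  have cτ : Continuous τ := continuous_iff_continuousAt.2 fun t => (hτ t).continuousAt
  have cσ : Continuous σ := continuous_iff_continuousAt.2 fun t => (hσ t).continuousAt
  have cH : Continuous H := continuous_iff_continuousAt.2 fun y => (hH y).continuousAt
  set w : ℝ → EuclideanSpace ℂ (Fin n) := fun t => dx t - τ t • (Complex.I • g (x t)) with hw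
  have cw : Continuous w := hdx.sub (cτ.smul ((hg.comp cx).const_smul Complex.I))
  have cnw : Continuous fun t => ‖w t‖ := cw.norm
  have cHx : Continuous fun t => H (x t) := cH.comp cx
  have cφ : Continuous fun t => realInnerCLM (g (x t)) (dx t) := by
    have : (fun t => realInnerCLM (g (x t)) (dx t)) =
        fun t => (inner ℂ (g (x t)) (dx t) : ℂ).re := rfl
    rw [this]
    exact Complex.continuous_re.comp ((hg.comp cx).inner hdx)
  -- the three squared norms
  have hG' : Real.sqrt
      ((∫ t in (0:ℝ)..1, ‖w t‖ ^ 2) +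
       (∫ t in (0:ℝ)..1, (dσ t - H (x t)) ^ 2) +
       (∫ t in (0:ℝ)..1, (dτ t) ^ 2)) < (h / 2) * min (1 / C_X) 1 := by
    simpa only [hw] using hG
  set Q1 := ∫ t in (0:ℝ)..1, ‖w t‖ ^ 2 with hQ1
  set Q2 := ∫ t in (0:ℝ)..1, (dσ t - H (x t)) ^ 2 with hQ2
  set Q3 := ∫ t in (0:ℝ)..1, (dτ t) ^ 2 with hQ3
  set G := Real.sqrt (Q1 + Q2 + Q3) with hGdef
  have hQ1nn : 0 ≤ Q1 := intervalIntegral.integral_nonneg h01 fun u _ => by positivity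
  have hQ2nn : 0 ≤ Q2 := intervalIntegral.integral_nonneg h01 fun u _ => by positivity
  have hQ3nn : 0 ≤ Q3 := intervalIntegral.integral_nonneg h01 fun u _ => by positivity
  have sq1 : Real.sqrt Q1 ≤ G := Real.sqrt_le_sqrt (by linarith)
  have sq2 : Real.sqrt Q2 ≤ G := Real.sqrt_le_sqrt (by linarith)
  have sq3 : Real.sqrt Q3 ≤ G := Real.sqrt_le_sqrt (by linarith)
  have hGltCX : G < h / (2 * C_X) := by
    have h1 : (h/2) * min (1/C_X) 1 ≤ (h/2) * (1/C_X) :=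
      mul_le_mul_of_nonneg_left (min_le_left _ _) (by linarith)
    have h2 : (h/2) * (1/C_X) = h / (2 * C_X) := by
      field_simp
    linarith [hG']
  have hGlth2 : G < h / 2 := by
    have h1 : (h/2) * min (1/C_X) 1 ≤ (h/2) * 1 :=
      mul_le_mul_of_nonneg_left (min_le_right _ _) (by linarith)
    linarith [hG']
  have hGleα : G ≤ α₀ := by linarith
  -- L¹ bounds
  have hI1 : (∫ t in (0:ℝ)..1, ‖w t‖) ≤ Real.sqrt Q1 := by
    have := l1_le_l2 (fun t => ‖w t‖) cnw
    simpa [hQ1] using this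
  have hI2 : (∫ t in (0:ℝ)..1, |dσ t - H (x t)|) ≤ Real.sqrt Q2 :=
    l1_le_l2 (fun t => dσ t - H (x t)) (hdσ.sub cHx)
  have hI3 : (∫ t in (0:ℝ)..1, |dτ t|) ≤ Real.sqrt Q3 :=
    l1_le_l2 dτ hdτ
  -- derivative of H ∘ x
  have hHx : ∀ t, HasDerivAt (fun s => H (x s)) (realInnerCLM (g (x t)) (dx t)) t :=
    fun t => (hH (x t)).comp_hasDerivAt t (hx t)
  -- pointwise bound on the derivative of H ∘ x
  have hφbound : ∀ u, |realInnerCLM (g (x u)) (dx u)| ≤ C_X * ‖w u‖ := by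
    intro u
    have h1 : realInnerCLM (g (x u)) (dx u) = realInnerCLM (g (x u)) (w u) := by
      simp only [hw, _root_.map_sub, _root_.map_smul, realInnerCLM_I_self, smul_zero, sub_zero]
    rw [h1]
    exact (realInnerCLM_abs_le _ _).trans
      (mul_le_mul_of_nonneg_right (hgb _) (norm_nonneg _))
  -- Step 1 : |H (x t)| ≤ h for all t
  have hPlt : (∫ u in (0:ℝ)..1, |realInnerCLM (g (x u)) (dx u)|) < h / 2 := by
    have hstep : (∫ u in (0:ℝ)..1, |realInnerCLM (g (x u)) (dx u)|) ≤
        ∫ u in (0:ℝ)..1, C_X * ‖w u‖ :=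
      intervalIntegral.integral_mono_on h01 (cφ.abs.intervalIntegrable 0 1)
        ((continuous_const.mul cnw).intervalIntegrable 0 1) (fun u _ => hφbound u)
    have heq : (∫ u in (0:ℝ)..1, C_X * ‖w u‖) = C_X * ∫ u in (0:ℝ)..1, ‖w u‖ :=
      intervalIntegral.integral_const_mul _ _
    have hlt : C_X * (∫ u in (0:ℝ)..1, ‖w u‖) < C_X * (h / (2 * C_X)) := by
      apply mul_lt_mul_of_pos_left _ hCX
      exact lt_of_le_of_lt (hI1.trans sq1) hGltCX
    have : C_X * (h / (2 * C_X)) = h / 2 := by field_simp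
    linarith
  have hmean : |∫ s in (0:ℝ)..1, H (x s)| < h / 2 := by
    have hdσ0 : (∫ s in (0:ℝ)..1, dσ s) = 0 := by
      rw [intervalIntegral.integral_eq_sub_of_hasDerivAt (fun s _ => hσ s)
        (hdσ.intervalIntegrable 0 1)]
      have := hσper 0
      rw [zero_add] at this
      rw [this, sub_self]
    have hsub : (∫ s in (0:ℝ)..1, (dσ s - H (x s))) =
        (∫ s in (0:ℝ)..1, dσ s) - ∫ s in (0:ℝ)..1, H (x s) :=
      intervalIntegral.integral_sub (hdσ.intervalIntegrable 0 1) (cHx.intervalIntegrable 0 1)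
    have habs : |∫ s in (0:ℝ)..1, (dσ s - H (x s))| ≤ Real.sqrt Q2 :=
      (intervalIntegral.abs_integral_le_integral_abs h01).trans hI2
    rw [hdσ0, zero_sub] at hsub
    have : |∫ s in (0:ℝ)..1, H (x s)| ≤ Real.sqrt Q2 := by
      rw [← abs_neg, ← hsub]; exact habs
    linarith
  have hN1 : ∀ t ∈ Set.Icc (0:ℝ) 1, |H (x t)| ≤ h := by
    intro t ht
    have hdiff : ∀ s ∈ Set.Icc (0:ℝ) 1, |H (x t) - H (x s)| ≤
        ∫ u in (0:ℝ)..1, |realInnerCLM (g (x u)) (dx u)| :=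
      fun s hs => ftc_bound hHx cφ hs ht
    have e1 : (∫ s in (0:ℝ)..1, (H (x t) - H (x s))) =
        H (x t) - ∫ s in (0:ℝ)..1, H (x s) := by
      rw [intervalIntegral.integral_sub (intervalIntegrable_const) (cHx.intervalIntegrable 0 1)]
      simp
    have e2 : |∫ s in (0:ℝ)..1, (H (x t) - H (x s))| ≤
        ∫ u in (0:ℝ)..1, |realInnerCLM (g (x u)) (dx u)| := by
      calc |∫ s in (0:ℝ)..1, (H (x t) - H (x s))| ≤
          ∫ s in (0:ℝ)..1, |H (x t) - H (x s)| :=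
            intervalIntegral.abs_integral_le_integral_abs h01
        _ ≤ ∫ s in (0:ℝ)..1, (∫ u in (0:ℝ)..1, |realInnerCLM (g (x u)) (dx u)|) :=
            intervalIntegral.integral_mono_on h01
              ((continuous_const.sub cHx).abs.intervalIntegrable 0 1)
              (intervalIntegrable_const) hdiff
        _ = ∫ u in (0:ℝ)..1, |realInnerCLM (g (x u)) (dx u)| := by simp
    have e3 : |H (x t)| ≤ |∫ s in (0:ℝ)..1, H (x s)| +
        |∫ s in (0:ℝ)..1, (H (x t) - H (x s))| := by
      have key : H (x t) = (∫ s in (0:ℝ)..1, H (x s)) +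
          ∫ s in (0:ℝ)..1, (H (x t) - H (x s)) := by rw [e1]; ring
      have hab := abs_add_le (∫ s in (0:ℝ)..1, H (x s))
        (∫ s in (0:ℝ)..1, (H (x t) - H (x s)))
      rw [← key] at hab
      exact hab
    linarith
  have hN : ∀ t, |H (x t)| ≤ h := by
    intro t
    have hfr : H (x (Int.fract t)) = H (x t) :=
      per_fract (f := fun t => H (x t)) (fun s => congrArg H (hxper s)) t
    rw [← hfr]
    exact hN1 _ ⟨Int.fract_nonneg t, (Int.fract_lt_one t).le⟩
  -- bound on |∫ σ dτ|
  have hdτ0 : (∫ t in (0:ℝ)..1, dτ t) = 0 := by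
    rw [intervalIntegral.integral_eq_sub_of_hasDerivAt (fun s _ => hτ s)
      (hdτ.intervalIntegrable 0 1)]
    have := hτper 0
    rw [zero_add] at this
    rw [this, sub_self]
  have hσdτ : |∫ t in (0:ℝ)..1, σ t * dτ t| ≤ α₀ * S := by
    set σb := ∫ r in (0:ℝ)..1, σ r with hσb
    have hS0 : 0 ≤ S := le_trans (Real.sqrt_nonneg _) hS
    have hsplit : (∫ t in (0:ℝ)..1, σ t * dτ t) =
        (∫ t in (0:ℝ)..1, (σ t - σb) * dτ t) + σb * ∫ t in (0:ℝ)..1, dτ t := by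
      rw [← intervalIntegral.integral_const_mul, ← intervalIntegral.integral_add (f := fun t => (σ t - σb) * dτ t) (g := fun t => σb * dτ t)
        (((cσ.sub continuous_const).mul hdτ).intervalIntegrable 0 1)
        ((continuous_const.mul hdτ).intervalIntegrable 0 1)]
      apply intervalIntegral.integral_congr
      intro t _
      ring
    rw [hsplit, hdτ0, mul_zero, add_zero]
    have hcs : |∫ t in (0:ℝ)..1, (σ t - σb) * dτ t| ≤
        Real.sqrt (∫ t in (0:ℝ)..1, (σ t - σb) ^ 2) * Real.sqrt Q3 := by
      calc |∫ t in (0:ℝ)..1, (σ t - σb) * dτ t| ≤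
          ∫ t in (0:ℝ)..1, |(σ t - σb) * dτ t| :=
            intervalIntegral.abs_integral_le_integral_abs h01
        _ = ∫ t in (0:ℝ)..1, |σ t - σb| * |dτ t| := by
            apply intervalIntegral.integral_congr
            intro t _
            exact abs_mul _ _
        _ ≤ Real.sqrt (∫ t in (0:ℝ)..1, (σ t - σb) ^ 2) * Real.sqrt Q3 :=
            cs_aux _ _ (cσ.sub continuous_const) hdτ
    calc |∫ t in (0:ℝ)..1, (σ t - σb) * dτ t| ≤
        Real.sqrt (∫ t in (0:ℝ)..1, (σ t - σb) ^ 2) * Real.sqrt Q3 := hcs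
      _ ≤ S * α₀ := mul_le_mul hS (sq3.trans hGleα) (Real.sqrt_nonneg _) hS0
      _ = α₀ * S := mul_comm _ _
  -- bound on the reduced action
  have hS0 : 0 ≤ S := le_trans (Real.sqrt_nonneg _) hS
  have hA0 : 0 ≤ A := le_trans (abs_nonneg _) hA
  have hUbound : |(∫ t in (0:ℝ)..1, lam (x t) (dx t)) -
      (∫ t in (0:ℝ)..1, τ t * H (x t))| ≤ A + α₀ * S := by
    have h1 : ((∫ t in (0:ℝ)..1, lam (x t) (dx t)) - (∫ t in (0:ℝ)..1, τ t * H (x t))) =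
        ((∫ t in (0:ℝ)..1, lam (x t) (dx t)) - (∫ t in (0:ℝ)..1, σ t * dτ t) -
          (∫ t in (0:ℝ)..1, τ t * H (x t))) + (∫ t in (0:ℝ)..1, σ t * dτ t) := by ring
    rw [h1]
    exact (abs_add_le _ _).trans (add_le_add hA hσdτ)
  -- decomposition of lam (x t) (dx t)
  have hdecomp : ∀ t, lam (x t) (dx t) =
      lam (x t) (w t) + τ t * lam (x t) (Complex.I • g (x t)) := by
    intro t
    have : lam (x t) (w t) = lam (x t) (dx t) - τ t * lam (x t) (Complex.I • g (x t)) := by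
      simp only [hw, _root_.map_sub, _root_.map_smul, smul_eq_mul]
    linarith
  have hebound : ∀ t, |lam (x t) (w t)| ≤ B_lam * ‖w t‖ := by
    intro t
    exact ((lam (x t)).le_opNorm _).trans
      (mul_le_mul_of_nonneg_right (hlamb _ (hN t)) (norm_nonneg _))
  -- the constant B
  have hwB : B_lam * (∫ t in (0:ℝ)..1, ‖w t‖) ≤ h * B_lam / (2 * C_X) := by
    have h1 : (∫ t in (0:ℝ)..1, ‖w t‖) ≤ h / (2 * C_X) :=
      hI1.trans (sq1.trans hGltCX.le)
    calc B_lam * (∫ t in (0:ℝ)..1, ‖w t‖) ≤ B_lam * (h / (2 * C_X)) :=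
        mul_le_mul_of_nonneg_left h1 hBlam
      _ = h * B_lam / (2 * C_X) := by ring
  -- argmin of |τ| on [0,1]
  obtain ⟨t₁, ht₁mem, ht₁min⟩ := (isCompact_Icc (a := (0:ℝ)) (b := 1)).exists_isMinOn
    (Set.nonempty_Icc.2 h01) (cτ.abs.continuousOn)
  have ht₁min' : ∀ t ∈ Set.Icc (0:ℝ) 1, |τ t₁| ≤ |τ t| := fun t ht => ht₁min ht
  set K := (3 / α₀) * (A + α₀ * S + h * B_lam / (2 * C_X)) with hK
  have hB0 : 0 ≤ h * B_lam / (2 * C_X) := by positivity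
  have hK0 : 0 ≤ K := by positivity
  -- integrability of the action integrand pieces
  have cu : Continuous fun t => lam (x t) (dx t) - τ t * H (x t) :=
    hlamcont.sub (cτ.mul cHx)
  have hu_eq : (∫ t in (0:ℝ)..1, (lam (x t) (dx t) - τ t * H (x t))) =
      (∫ t in (0:ℝ)..1, lam (x t) (dx t)) - ∫ t in (0:ℝ)..1, τ t * H (x t) :=
    intervalIntegral.integral_sub (hlamcont.intervalIntegrable 0 1)
      ((cτ.mul cHx).intervalIntegrable 0 1)
  -- the key claim: |τ t₁| ≤ K
  have hclaim : |τ t₁| ≤ K := by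
    by_contra hcon
    push_neg at hcon
    have hne : ∀ t ∈ Set.Icc (0:ℝ) 1, τ t ≠ 0 := by
      intro t ht h0
      have := ht₁min' t ht
      rw [h0, abs_zero] at this
      have : |τ t₁| = 0 := le_antisymm this (abs_nonneg _)
      linarith
    have h0mem : (0:ℝ) ∈ Set.Icc (0:ℝ) 1 := ⟨le_refl _, h01⟩
    rcases (hne 0 h0mem).lt_or_gt with hneg | hpos
    · -- τ < 0 on [0,1]
      have hneg' : ∀ t ∈ Set.Icc (0:ℝ) 1, τ t < 0 := by
        intro t ht
        rcases (hne t ht).lt_or_gt with h' | h'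
        · exact h'
        · exfalso
          have hsub : Set.Icc (τ 0) (τ t) ⊆ τ '' Set.Icc 0 t :=
            intermediate_value_Icc ht.1 (cτ.continuousOn)
          obtain ⟨u, hu, hu0⟩ := hsub ⟨hneg.le, h'.le⟩
          exact hne u ⟨hu.1, hu.2.trans ht.2⟩ hu0
      have hpt : ∀ t ∈ Set.Icc (0:ℝ) 1,
          lam (x t) (dx t) - τ t * H (x t) ≤ α₀ / 3 * τ t + B_lam * ‖w t‖ := by
        intro t ht
        have hd := hdecomp t
        have hF := hcontact (x t) (hN t)
        have he := (abs_le.1 (hebound t)).2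
        have hτt : τ t ≤ 0 := (hneg' t ht).le
        have hprod : τ t * (lam (x t) (Complex.I • g (x t)) - H (x t)) ≤ τ t * (α₀ / 3) :=
          mul_le_mul_of_nonpos_left hF hτt
        rw [mul_sub] at hprod
        linarith
      have hup : ∀ t ∈ Set.Icc (0:ℝ) 1, τ t ≤ -|τ t₁| := by
        intro t ht
        have h1 := ht₁min' t ht
        have h2 : |τ t| = -τ t := abs_of_neg (hneg' t ht)
        linarith
      have hint : (∫ t in (0:ℝ)..1, (lam (x t) (dx t) - τ t * H (x t))) ≤
          ∫ t in (0:ℝ)..1, (α₀ / 3 * τ t + B_lam * ‖w t‖) :=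
        intervalIntegral.integral_mono_on h01 (cu.intervalIntegrable 0 1)
          (((continuous_const.mul cτ).add (continuous_const.mul cnw)).intervalIntegrable 0 1)
          hpt
      have hrhs : (∫ t in (0:ℝ)..1, (α₀ / 3 * τ t + B_lam * ‖w t‖)) =
          α₀ / 3 * (∫ t in (0:ℝ)..1, τ t) + B_lam * ∫ t in (0:ℝ)..1, ‖w t‖ := by
        rw [intervalIntegral.integral_add (f := fun t => α₀ / 3 * τ t) (g := fun t => B_lam * ‖w t‖) ((continuous_const.mul cτ).intervalIntegrable 0 1)
          ((continuous_const.mul cnw).intervalIntegrable 0 1),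
          intervalIntegral.integral_const_mul, intervalIntegral.integral_const_mul]
      have hτint : (∫ t in (0:ℝ)..1, τ t) ≤ -|τ t₁| := by
        calc (∫ t in (0:ℝ)..1, τ t) ≤ ∫ _t in (0:ℝ)..1, (-|τ t₁|) :=
            intervalIntegral.integral_mono_on h01 (cτ.intervalIntegrable 0 1)
              intervalIntegrable_const hup
          _ = -|τ t₁| := by simp
      have hlow : -(A + α₀ * S) ≤
          (∫ t in (0:ℝ)..1, (lam (x t) (dx t) - τ t * H (x t))) := by
        rw [hu_eq]
        linarith [(abs_le.1 hUbound).1]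
      have hmul : α₀ / 3 * (∫ t in (0:ℝ)..1, τ t) ≤ α₀ / 3 * (-|τ t₁|) :=
        mul_le_mul_of_nonneg_left hτint (by positivity)
      have hfinal : α₀ / 3 * |τ t₁| ≤ A + α₀ * S + h * B_lam / (2 * C_X) := by
        linarith
      have : |τ t₁| ≤ K := by
        rw [hK]
        have := mul_le_mul_of_nonneg_left hfinal (le_of_lt (by positivity : (0:ℝ) < 3 / α₀))
        calc |τ t₁| = 3 / α₀ * (α₀ / 3 * |τ t₁|) := by field_simp
          _ ≤ 3 / α₀ * (A + α₀ * S + h * B_lam / (2 * C_X)) := this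
      linarith
    · -- τ > 0 on [0,1]
      have hpos' : ∀ t ∈ Set.Icc (0:ℝ) 1, 0 < τ t := by
        intro t ht
        rcases (hne t ht).lt_or_gt with h' | h'
        · exfalso
          have hsub : Set.Icc (τ t) (τ 0) ⊆ τ '' Set.Icc 0 t :=
            intermediate_value_Icc' ht.1 (cτ.continuousOn)
          obtain ⟨u, hu, hu0⟩ := hsub ⟨h'.le, hpos.le⟩
          exact hne u ⟨hu.1, hu.2.trans ht.2⟩ hu0
        · exact h'
      have hpt : ∀ t ∈ Set.Icc (0:ℝ) 1,
          α₀ / 3 * τ t - B_lam * ‖w t‖ ≤ lam (x t) (dx t) - τ t * H (x t) := by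
        intro t ht
        have hd := hdecomp t
        have hF := hcontact (x t) (hN t)
        have he := (abs_le.1 (hebound t)).1
        have hτt : 0 ≤ τ t := (hpos' t ht).le
        have hprod : τ t * (α₀ / 3) ≤ τ t * (lam (x t) (Complex.I • g (x t)) - H (x t)) :=
          mul_le_mul_of_nonneg_left hF hτt
        rw [mul_sub] at hprod
        linarith
      have hlo : ∀ t ∈ Set.Icc (0:ℝ) 1, |τ t₁| ≤ τ t := by
        intro t ht
        have h1 := ht₁min' t ht
        have h2 : |τ t| = τ t := abs_of_pos (hpos' t ht)
        linarith
      have hint : (∫ t in (0:ℝ)..1, (α₀ / 3 * τ t - B_lam * ‖w t‖)) ≤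
          ∫ t in (0:ℝ)..1, (lam (x t) (dx t) - τ t * H (x t)) :=
        intervalIntegral.integral_mono_on h01
          (((continuous_const.mul cτ).sub (continuous_const.mul cnw)).intervalIntegrable 0 1)
          (cu.intervalIntegrable 0 1) hpt
      have hlhs : (∫ t in (0:ℝ)..1, (α₀ / 3 * τ t - B_lam * ‖w t‖)) =
          α₀ / 3 * (∫ t in (0:ℝ)..1, τ t) - B_lam * ∫ t in (0:ℝ)..1, ‖w t‖ := by
        rw [intervalIntegral.integral_sub (f := fun t => α₀ / 3 * τ t) (g := fun t => B_lam * ‖w t‖) ((continuous_const.mul cτ).intervalIntegrable 0 1)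
          ((continuous_const.mul cnw).intervalIntegrable 0 1),
          intervalIntegral.integral_const_mul, intervalIntegral.integral_const_mul]
      have hτint : |τ t₁| ≤ ∫ t in (0:ℝ)..1, τ t := by
        calc |τ t₁| = ∫ _t in (0:ℝ)..1, |τ t₁| := by simp
          _ ≤ ∫ t in (0:ℝ)..1, τ t :=
            intervalIntegral.integral_mono_on h01 intervalIntegrable_const
              (cτ.intervalIntegrable 0 1) hlo
      have hhigh : (∫ t in (0:ℝ)..1, (lam (x t) (dx t) - τ t * H (x t))) ≤ A + α₀ * S := by
        rw [hu_eq]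
        linarith [(abs_le.1 hUbound).2]
      have hmul : α₀ / 3 * |τ t₁| ≤ α₀ / 3 * (∫ t in (0:ℝ)..1, τ t) :=
        mul_le_mul_of_nonneg_left hτint (by positivity)
      have hfinal : α₀ / 3 * |τ t₁| ≤ A + α₀ * S + h * B_lam / (2 * C_X) := by
        linarith
      have : |τ t₁| ≤ K := by
        rw [hK]
        have := mul_le_mul_of_nonneg_left hfinal (le_of_lt (by positivity : (0:ℝ) < 3 / α₀))
        calc |τ t₁| = 3 / α₀ * (α₀ / 3 * |τ t₁|) := by field_simp
          _ ≤ 3 / α₀ * (A + α₀ * S + h * B_lam / (2 * C_X)) := this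
      linarith
  -- conclusion
  intro t
  have hfr : τ (Int.fract t) = τ t := per_fract hτper t
  have hfm : Int.fract t ∈ Set.Icc (0:ℝ) 1 := ⟨Int.fract_nonneg t, (Int.fract_lt_one t).le⟩
  have hvar : |τ (Int.fract t) - τ t₁| ≤ ∫ u in (0:ℝ)..1, |dτ u| :=
    ftc_bound hτ hdτ ht₁mem hfm
  have hvar' : |τ (Int.fract t) - τ t₁| ≤ α₀ := hvar.trans (hI3.trans (sq3.trans hGleα))
  calc |τ t| = |τ t₁ + (τ (Int.fract t) - τ t₁)| := by rw [← hfr]; congr 1; ring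
    _ ≤ |τ t₁| + |τ (Int.fract t) - τ t₁| := abs_add_le _ _
    _ ≤ K + α₀ := add_le_add hclaim hvar'
end

section
/- Fix n ≥ 1 and let E = ℂⁿ with real inner product ⟨u,v⟩ = Re ∑ₖ uₖ·conj(vₖ). Let H : E → ℝ be C¹ and bounded, with ‖H‖_∞ := sup_{x ∈ E} |H(x)|. Let I ⊆ ℝ be an unbounded interval, E > 0, and let ũ = (u, η, ζ) : I × ℝ → E × ℝ × ℝ be a smooth map, 1-periodic in the second variable t, which solves the flat Floer system ∂ₛu + i·∂ₜu + η·∇H(u) = 0, ∂ₛη + ∂ₜζ − H(u) = 0, ∂ₛζ − ∂ₜη = 0, and whose energy satisfies 𝔼(ũ) := ∫_I ∫₀¹ ( ‖∂ₛu‖² + |∂ₛη|² + |∂ₛζ|² ) dt ds ≤ E. Then for every s ∈ I, ( ∫₀¹ | ζ(s,t) − ζ̄(s) |² dt )^{1/2} ≤ 2·√E + ‖H‖_∞, where ζ̄(s) := ∫₀¹ ζ(s,t) dt (a quantity independent of s). -/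
open MeasureTheory intervalIntegral

section ZOHelpers
open Set


lemma zo_ii {a b : ℝ} (hab : a ≤ b) {f : ℝ → ℝ} (hf : ContinuousOn f (Set.Icc a b)) :
    IntervalIntegrable f volume a b :=
  (hf.mono (by rw [Set.uIcc_of_le hab])).intervalIntegrable

lemma zo_cs {a b : ℝ} (hab : a ≤ b) {f g : ℝ → ℝ}
    (hf : ContinuousOn f (Set.Icc a b)) (hg : ContinuousOn g (Set.Icc a b)) :
    (∫ x in a..b, f x * g x) ^ 2 ≤ (∫ x in a..b, f x ^ 2) * (∫ x in a..b, g x ^ 2) := by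
  set A := ∫ x in a..b, f x ^ 2 with hA
  set B := ∫ x in a..b, f x * g x with hB
  set C := ∫ x in a..b, g x ^ 2 with hC
  have key : ∀ lam : ℝ, 0 ≤ C * (lam * lam) + (-2 * B) * lam + A := by
    intro lam
    have h0 : 0 ≤ ∫ x in a..b, (f x - lam * g x) ^ 2 :=
      intervalIntegral.integral_nonneg hab (fun x _ => sq_nonneg _)
    have hexp : (∫ x in a..b, (f x - lam * g x) ^ 2)
        = A - 2 * lam * B + lam ^ 2 * C := by
      have e : (fun x => (f x - lam * g x) ^ 2)
          = fun x => f x ^ 2 - 2 * lam * (f x * g x) + lam ^ 2 * g x ^ 2 := by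
        funext x; ring
      rw [e, intervalIntegral.integral_add, intervalIntegral.integral_sub,
        intervalIntegral.integral_const_mul, intervalIntegral.integral_const_mul]
      · exact zo_ii hab (hf.pow 2)
      · exact (zo_ii hab (hf.mul hg)).const_mul _
      · exact (zo_ii hab (hf.pow 2)).sub ((zo_ii hab (hf.mul hg)).const_mul _)
      · exact (zo_ii hab (hg.pow 2)).const_mul _
    rw [hexp] at h0
    nlinarith [h0]
  have hd := discrim_le_zero key
  rw [discrim] at hd
  nlinarith [hd]

lemma zo_minkowski {a b : ℝ} (hab : a ≤ b) {f g : ℝ → ℝ}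
    (hf : ContinuousOn f (Set.Icc a b)) (hg : ContinuousOn g (Set.Icc a b)) :
    Real.sqrt (∫ x in a..b, (f x + g x) ^ 2)
      ≤ Real.sqrt (∫ x in a..b, f x ^ 2) + Real.sqrt (∫ x in a..b, g x ^ 2) := by
  set A := ∫ x in a..b, f x ^ 2 with hA
  set C := ∫ x in a..b, g x ^ 2 with hC
  have hA0 : 0 ≤ A := intervalIntegral.integral_nonneg hab (fun x _ => sq_nonneg _)
  have hC0 : 0 ≤ C := intervalIntegral.integral_nonneg hab (fun x _ => sq_nonneg _)
  have hB : (∫ x in a..b, f x * g x) ≤ Real.sqrt A * Real.sqrt C := by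
    have h1 := zo_cs hab hf hg
    have h2 : (∫ x in a..b, f x * g x) ≤ |∫ x in a..b, f x * g x| := le_abs_self _
    have h3 : |∫ x in a..b, f x * g x| = Real.sqrt ((∫ x in a..b, f x * g x) ^ 2) :=
      (Real.sqrt_sq_eq_abs _).symm
    have h4 : Real.sqrt ((∫ x in a..b, f x * g x) ^ 2) ≤ Real.sqrt (A * C) :=
      Real.sqrt_le_sqrt h1
    rw [Real.sqrt_mul hA0] at h4
    linarith
  have hexp : (∫ x in a..b, (f x + g x) ^ 2)
      = A + 2 * (∫ x in a..b, f x * g x) + C := by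
    have e : (fun x => (f x + g x) ^ 2)
        = fun x => f x ^ 2 + 2 * (f x * g x) + g x ^ 2 := by funext x; ring
    rw [e, intervalIntegral.integral_add, intervalIntegral.integral_add,
      intervalIntegral.integral_const_mul]
    · exact zo_ii hab (hf.pow 2)
    · exact (zo_ii hab (hf.mul hg)).const_mul _
    · exact (zo_ii hab (hf.pow 2)).add ((zo_ii hab (hf.mul hg)).const_mul _)
    · exact zo_ii hab (hg.pow 2)
  have hle : (∫ x in a..b, (f x + g x) ^ 2) ≤ (Real.sqrt A + Real.sqrt C) ^ 2 := by
    have := Real.sq_sqrt hA0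
    have := Real.sq_sqrt hC0
    rw [hexp]; nlinarith
  calc Real.sqrt (∫ x in a..b, (f x + g x) ^ 2)
      ≤ Real.sqrt ((Real.sqrt A + Real.sqrt C) ^ 2) := Real.sqrt_le_sqrt hle
    _ = Real.sqrt A + Real.sqrt C := Real.sqrt_sq (by positivity)

lemma zo_cs_one {a b : ℝ} (hab : a ≤ b) {f : ℝ → ℝ}
    (hf : ContinuousOn f (Set.Icc a b)) :
    (∫ x in a..b, f x) ^ 2 ≤ (b - a) * ∫ x in a..b, f x ^ 2 := by
  have h := zo_cs hab hf (continuousOn_const (c := (1:ℝ)))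
  simp only [mul_one, one_pow] at h
  rw [intervalIntegral.integral_const, smul_eq_mul, mul_one] at h
  linarith [h]

/-- subtracting the mean decreases the `L²` integral -/
lemma zo_mean_sub {h : ℝ → ℝ} (hc : ContinuousOn h (Set.Icc 0 1)) :
    (∫ t in (0:ℝ)..1, (h t - ∫ r in (0:ℝ)..1, h r) ^ 2)
      ≤ ∫ t in (0:ℝ)..1, (h t) ^ 2 := by
  have h01 : (0:ℝ) ≤ 1 := by norm_num
  set m := ∫ r in (0:ℝ)..1, h r with hm
  have e : (fun t => (h t - m) ^ 2) = fun t => h t ^ 2 - (2 * m) * h t + m ^ 2 := by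
    funext t; ring
  rw [e, intervalIntegral.integral_add, intervalIntegral.integral_sub,
    intervalIntegral.integral_const_mul, intervalIntegral.integral_const]
  · simp only [smul_eq_mul, sub_zero, one_mul]
    nlinarith [sq_nonneg m]
  · exact zo_ii h01 (hc.pow 2)
  · exact (zo_ii h01 hc).const_mul _
  · exact (zo_ii h01 (hc.pow 2)).sub ((zo_ii h01 hc).const_mul _)
  · exact intervalIntegrable_const

/-- slice continuity -/
lemma zo_slice {β : Type*} [TopologicalSpace β] {X : ℝ → ℝ → β} {I : Set ℝ}
    (hX : ContinuousOn (fun p : ℝ × ℝ => X p.1 p.2) (I ×ˢ Set.univ)) {σ : ℝ}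
    (hσ : σ ∈ I) : Continuous (fun t => X σ t) := by
  rw [← continuousOn_univ]
  exact hX.comp ((continuous_const.prodMk continuous_id).continuousOn)
    (fun t _ => ⟨hσ, trivial⟩)

/-- Poincaré inequality with constant 1 on the unit interval -/
lemma zo_poincare {φ dφ : ℝ → ℝ} (hd : ∀ t, HasDerivAt φ (dφ t) t)
    (hc : Continuous dφ) :
    (∫ t in (0:ℝ)..1, (φ t - ∫ r in (0:ℝ)..1, φ r) ^ 2)
      ≤ ∫ t in (0:ℝ)..1, (dφ t) ^ 2 := by
  have h01 : (0:ℝ) ≤ 1 := by norm_num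
  have hφc : Continuous φ := by
    rw [continuous_iff_continuousAt]; exact fun t => (hd t).continuousAt
  set m := ∫ r in (0:ℝ)..1, φ r with hm
  set D := ∫ t in (0:ℝ)..1, |dφ t| with hD
  have hD0 : 0 ≤ D := intervalIntegral.integral_nonneg h01 (fun x _ => abs_nonneg _)
  have hdiff : ∀ t ∈ Set.Icc (0:ℝ) 1, ∀ r ∈ Set.Icc (0:ℝ) 1, |φ t - φ r| ≤ D := by
    intro t ht r hr
    have hftc : (∫ x in r..t, dφ x) = φ t - φ r :=
      intervalIntegral.integral_eq_sub_of_hasDerivAt (fun x _ => hd x)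
        (hc.intervalIntegrable r t)
    rw [← hftc]
    calc |∫ x in r..t, dφ x| ≤ abs (∫ x in r..t, |dφ x|) := by
          simpa using intervalIntegral.norm_integral_le_abs_integral_norm
            (a := r) (b := t) (f := dφ) (μ := volume)
      _ ≤ abs (∫ x in (0:ℝ)..1, |dφ x|) := by
          apply intervalIntegral.abs_integral_mono_interval
          · rw [Set.uIoc_of_le h01]
            exact Set.Ioc_subset_Ioc (le_min hr.1 ht.1) (max_le hr.2 ht.2)
          · exact Filter.Eventually.of_forall (fun x => abs_nonneg _)
          · exact (hc.abs).intervalIntegrable 0 1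
      _ = D := abs_of_nonneg hD0
  have hpoint : ∀ t ∈ Set.Icc (0:ℝ) 1, (φ t - m) ^ 2 ≤ D ^ 2 := by
    intro t ht
    have e1 : φ t - m = ∫ r in (0:ℝ)..1, (φ t - φ r) := by
      rw [intervalIntegral.integral_sub intervalIntegrable_const
        (hφc.intervalIntegrable 0 1), intervalIntegral.integral_const]
      simp [hm]
    have e2 : |φ t - m| ≤ D := by
      rw [e1]
      calc |∫ r in (0:ℝ)..1, (φ t - φ r)| ≤ ∫ r in (0:ℝ)..1, |φ t - φ r| :=
            intervalIntegral.abs_integral_le_integral_abs h01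
        _ ≤ ∫ r in (0:ℝ)..1, D := by
            apply intervalIntegral.integral_mono_on h01 _ intervalIntegrable_const
            · exact fun r hr => hdiff t ht r hr
            · exact ((continuous_const.sub hφc).abs).intervalIntegrable 0 1
        _ = D := by simp
    calc (φ t - m) ^ 2 = |φ t - m| ^ 2 := (sq_abs _).symm
      _ ≤ D ^ 2 := by nlinarith [abs_nonneg (φ t - m)]
  calc (∫ t in (0:ℝ)..1, (φ t - m) ^ 2) ≤ ∫ t in (0:ℝ)..1, D ^ 2 := by
        apply intervalIntegral.integral_mono_on h01 _ intervalIntegrable_const hpoint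
        exact (((hφc.sub continuous_const).pow 2)).intervalIntegrable 0 1
    _ = D ^ 2 := by simp
    _ ≤ ∫ t in (0:ℝ)..1, (dφ t) ^ 2 := by
        have := zo_cs_one h01 (f := fun t => |dφ t|) (hc.abs.continuousOn)
        simp only [sq_abs] at this
        linarith

/-- Chebyshev / mean value -/
lemma zo_exists_small {F : ℝ → ℝ} {a E : ℝ} (hint : IntegrableOn F (Set.Ioc a (a+1)))
    (hle : ∫ σ in Set.Ioc a (a+1), F σ ≤ E) :
    ∃ σ ∈ Set.Ioc a (a+1), F σ ≤ E := by
  set μ := volume.restrict (Set.Ioc a (a+1)) with hμ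
  have hms : volume (Set.Ioc a (a+1)) = 1 := by
    rw [Real.volume_Ioc]; norm_num
  have hprob : IsProbabilityMeasure μ := by
    constructor
    rw [hμ, Measure.restrict_apply_univ, hms]
  have hN : μ (Set.Ioc a (a+1))ᶜ = 0 := by
    rw [hμ, Measure.restrict_apply (measurableSet_Ioc.compl)]
    simp
  obtain ⟨x, hxN, hx⟩ := exists_notMem_null_le_average
    (IsProbabilityMeasure.ne_zero μ) hint hN
  rw [average_eq_integral] at hx
  exact ⟨x, not_not.mp hxN, hx.trans hle⟩


lemma zo_key {I : Set ℝ} {ζ ζs : ℝ → ℝ → ℝ} {F : ℝ → ℝ} {a b : ℝ}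
    (hab : a ≤ b) (hlen : b - a ≤ 1) (hsub : Set.Icc a b ⊆ I)
    (hζs : ∀ s ∈ I, ∀ t, HasDerivAt (fun s' => ζ s' t) (ζs s t) s)
    (hζsc : ContinuousOn (fun p : ℝ × ℝ => ζs p.1 p.2) (I ×ˢ Set.univ))
    (hζc : ∀ σ ∈ I, Continuous (fun t => ζ σ t))
    (hFint : IntervalIntegrable F volume a b)
    (hF : ∀ σ ∈ Set.Icc a b, (∫ t in (0:ℝ)..1, (ζs σ t) ^ 2) ≤ F σ) :
    (∫ t in (0:ℝ)..1, (ζ b t - ζ a t) ^ 2) ≤ ∫ σ in a..b, F σ := by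
  have h01 : (0:ℝ) ≤ 1 := by norm_num
  have haI : a ∈ I := hsub ⟨le_refl a, hab⟩
  have hbI : b ∈ I := hsub ⟨hab, le_refl b⟩
  -- continuity of the squared field on the rectangle (t, σ)
  have hKc : ContinuousOn (fun p : ℝ × ℝ => (ζs p.2 p.1) ^ 2)
      (Set.Icc (0:ℝ) 1 ×ˢ Set.Icc a b) := by
    have : ContinuousOn ((fun p : ℝ × ℝ => ζs p.1 p.2) ∘ Prod.swap)
        (Set.Icc (0:ℝ) 1 ×ˢ Set.Icc a b) :=
      hζsc.comp continuous_swap.continuousOn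
        (fun p hp => ⟨hsub hp.2, trivial⟩)
    exact this.pow 2
  -- integrability on the product
  have hint : Integrable (Function.uncurry fun t σ => (ζs σ t) ^ 2)
      ((volume.restrict (Set.Ioc (0:ℝ) 1)).prod (volume.restrict (Set.Ioc a b))) := by
    rw [Measure.prod_restrict, ← Measure.volume_eq_prod]
    exact (hKc.integrableOn_compact (isCompact_Icc.prod isCompact_Icc)).mono_set
      (Set.prod_mono Set.Ioc_subset_Icc_self Set.Ioc_subset_Icc_self)
  -- slice continuity in σ
  have hslice : ∀ t : ℝ, ContinuousOn (fun σ => ζs σ t) (Set.Icc a b) := by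
    intro t
    exact hζsc.comp ((continuous_id.prodMk continuous_const).continuousOn)
      (fun σ hσ => ⟨hsub hσ, trivial⟩)
  set W : ℝ → ℝ := fun t => ∫ σ in a..b, (ζs σ t) ^ 2 with hW
  have hWeq : (fun t => ∫ σ in Set.Ioc a b, (ζs σ t) ^ 2) = W := by
    funext t; exact (intervalIntegral.integral_of_le hab).symm
  have hWint : IntervalIntegrable W volume 0 1 := by
    rw [intervalIntegrable_iff, Set.uIoc_of_le h01]
    have := hint.integral_prod_left
    simpa [Function.uncurry, hWeq, IntegrableOn] using this
  -- pointwise bound via FTC and Cauchy-Schwarz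
  have hpt : ∀ t ∈ Set.Icc (0:ℝ) 1, (ζ b t - ζ a t) ^ 2 ≤ W t := by
    intro t _
    have hftc : (∫ σ in a..b, ζs σ t) = ζ b t - ζ a t := by
      apply intervalIntegral.integral_eq_sub_of_hasDerivAt
      · intro σ hσ
        rw [Set.uIcc_of_le hab] at hσ
        exact hζs σ (hsub hσ) t
      · exact zo_ii hab (hslice t)
    have hcs := zo_cs_one hab (hslice t)
    have hnn : 0 ≤ ∫ σ in a..b, (ζs σ t) ^ 2 :=
      intervalIntegral.integral_nonneg hab (fun x _ => sq_nonneg _)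
    calc (ζ b t - ζ a t) ^ 2 = (∫ σ in a..b, ζs σ t) ^ 2 := by rw [hftc]
      _ ≤ (b - a) * ∫ σ in a..b, (ζs σ t) ^ 2 := hcs
      _ ≤ 1 * ∫ σ in a..b, (ζs σ t) ^ 2 := mul_le_mul_of_nonneg_right hlen hnn
      _ = W t := by rw [one_mul]
  -- assemble, using Fubini
  have hmono1 : (∫ t in (0:ℝ)..1, (ζ b t - ζ a t) ^ 2) ≤ ∫ t in (0:ℝ)..1, W t := by
    apply intervalIntegral.integral_mono_on h01 _ hWint hpt
    exact (((hζc b hbI).sub (hζc a haI)).pow 2).intervalIntegrable 0 1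
  have hfub : (∫ t in (0:ℝ)..1, W t)
      = ∫ σ in a..b, (∫ t in (0:ℝ)..1, (ζs σ t) ^ 2) := by
    rw [intervalIntegral.integral_of_le h01, intervalIntegral.integral_of_le hab]
    have hswap := MeasureTheory.integral_integral_swap
      (f := fun t σ => (ζs σ t) ^ 2) hint
    have e2 : (fun σ => ∫ t in (0:ℝ)..1, (ζs σ t) ^ 2)
        = fun σ => ∫ t in Set.Ioc (0:ℝ) 1, (ζs σ t) ^ 2 :=
      funext fun σ => intervalIntegral.integral_of_le h01
    rw [← hWeq, e2]
    simpa using hswap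
  have hmono2 : (∫ σ in a..b, (∫ t in (0:ℝ)..1, (ζs σ t) ^ 2)) ≤ ∫ σ in a..b, F σ := by
    apply intervalIntegral.integral_mono_on hab _ hFint hF
    rw [intervalIntegrable_iff, Set.uIoc_of_le hab]
    have := hint.integral_prod_right
    have e : (fun σ => ∫ t in Set.Ioc (0:ℝ) 1, (ζs σ t) ^ 2)
        = fun σ => ∫ t in (0:ℝ)..1, (ζs σ t) ^ 2 := by
      funext σ; rw [intervalIntegral.integral_of_le h01]
    simpa [Function.uncurry, e, IntegrableOn] using this
  linarith [hmono1, hfub ▸ hmono1, hmono2, hfub]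

end ZOHelpers

/-- Lemma 3.3 of the paper (flat model): a uniform `L²` bound on the oscillation of
the `ζ`-component of a finite-energy solution of the flat Floer system on an
unbounded interval `I`: for every `s ∈ I`,
`‖ζ(s,·) − ζ̄(s)‖_{L²(0,1)} ≤ 2√E + ‖H‖_∞`. -/
theorem zeta_oscillation_bound
    (n : ℕ) (hn : 1 ≤ n)
    (H : EuclideanSpace ℂ (Fin n) → ℝ)
    (g : EuclideanSpace ℂ (Fin n) → EuclideanSpace ℂ (Fin n))
    (hH : ∀ x, HasFDerivAt H (realInnerCLM (g x)) x)
    (hg : Continuous g)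
    (Hinf : ℝ) (hHb : ∀ x, |H x| ≤ Hinf)
    (I : Set ℝ) (hIint : I.OrdConnected) (hIunb : ¬ Bornology.IsBounded I)
    (Ebound : ℝ) (hE : 0 < Ebound)
    (u : ℝ → ℝ → EuclideanSpace ℂ (Fin n))
    (us ut : ℝ → ℝ → EuclideanSpace ℂ (Fin n))
    (η ζ ηs ηt ζs ζt : ℝ → ℝ → ℝ)
    -- partial derivatives
    (hus : ∀ s ∈ I, ∀ t, HasDerivAt (fun s' => u s' t) (us s t) s)
    (hut : ∀ s ∈ I, ∀ t, HasDerivAt (fun t' => u s t') (ut s t) t)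
    (hηs : ∀ s ∈ I, ∀ t, HasDerivAt (fun s' => η s' t) (ηs s t) s)
    (hηt : ∀ s ∈ I, ∀ t, HasDerivAt (fun t' => η s t') (ηt s t) t)
    (hζs : ∀ s ∈ I, ∀ t, HasDerivAt (fun s' => ζ s' t) (ζs s t) s)
    (hζt : ∀ s ∈ I, ∀ t, HasDerivAt (fun t' => ζ s t') (ζt s t) t)
    -- smoothness of the derivative fields
    (husc : ContinuousOn (fun p : ℝ × ℝ => us p.1 p.2) (I ×ˢ Set.univ))
    (hηsc : ContinuousOn (fun p : ℝ × ℝ => ηs p.1 p.2) (I ×ˢ Set.univ))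
    (hζsc : ContinuousOn (fun p : ℝ × ℝ => ζs p.1 p.2) (I ×ˢ Set.univ))
    (hζtc : ContinuousOn (fun p : ℝ × ℝ => ζt p.1 p.2) (I ×ˢ Set.univ))
    -- 1-periodicity in t
    (huper : ∀ s t, u s (t + 1) = u s t)
    (hηper : ∀ s t, η s (t + 1) = η s t)
    (hζper : ∀ s t, ζ s (t + 1) = ζ s t)
    -- the flat Floer system
    (heq1 : ∀ s ∈ I, ∀ t, us s t + Complex.I • ut s t + η s t • g (u s t) = 0)
    (heq2 : ∀ s ∈ I, ∀ t, ηs s t + ζt s t - H (u s t) = 0)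
    (heq3 : ∀ s ∈ I, ∀ t, ζs s t - ηt s t = 0)
    -- finite energy, bounded by Ebound
    (hEint : IntegrableOn
      (fun s => ∫ t in (0:ℝ)..1, (‖us s t‖ ^ 2 + (ηs s t) ^ 2 + (ζs s t) ^ 2)) I)
    (hEn : (∫ s in I, ∫ t in (0:ℝ)..1,
        (‖us s t‖ ^ 2 + (ηs s t) ^ 2 + (ζs s t) ^ 2)) ≤ Ebound) :
    ∀ s ∈ I,
      Real.sqrt (∫ t in (0:ℝ)..1, (ζ s t - ∫ t' in (0:ℝ)..1, ζ s t') ^ 2)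
        ≤ 2 * Real.sqrt Ebound + Hinf := by
  intro s hs
  have h01 : (0:ℝ) ≤ 1 := by norm_num
  have hHinf0 : 0 ≤ Hinf := le_trans (abs_nonneg _) (hHb 0)
  have hHc : Continuous H := by
    rw [continuous_iff_continuousAt]; exact fun x => (hH x).continuousAt
  set F : ℝ → ℝ := fun σ => ∫ t in (0:ℝ)..1,
    (‖us σ t‖ ^ 2 + (ηs σ t) ^ 2 + (ζs σ t) ^ 2) with hF
  have hFnn : ∀ σ, 0 ≤ F σ :=
    fun σ => intervalIntegral.integral_nonneg h01 (fun t _ => by positivity)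
  have hFae : 0 ≤ᵐ[volume.restrict I] F := Filter.Eventually.of_forall hFnn
  have hζcont : ∀ σ ∈ I, Continuous (fun t => ζ σ t) := fun σ hσ => by
    rw [continuous_iff_continuousAt]; exact fun t => (hζt σ hσ t).continuousAt
  have hucont : ∀ σ ∈ I, Continuous (fun t => u σ t) := fun σ hσ => by
    rw [continuous_iff_continuousAt]; exact fun t => (hut σ hσ t).continuousAt
  have hsumint : ∀ σ ∈ I, IntervalIntegrable
      (fun t => ‖us σ t‖ ^ 2 + (ηs σ t) ^ 2 + (ζs σ t) ^ 2) volume 0 1 :=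
    fun σ hσ =>
      ((((zo_slice husc hσ).norm.pow 2).add ((zo_slice hηsc hσ).pow 2)).add
        ((zo_slice hζsc hσ).pow 2)).intervalIntegrable 0 1
  have hζbound : ∀ σ ∈ I, (∫ t in (0:ℝ)..1, (ζs σ t) ^ 2) ≤ F σ := by
    intro σ hσ
    apply intervalIntegral.integral_mono_on h01
      (((zo_slice hζsc hσ).pow 2).intervalIntegrable 0 1) (hsumint σ hσ)
    intro t _
    simp only [Pi.pow_apply]
    nlinarith [sq_nonneg (‖us σ t‖), sq_nonneg (ηs σ t)]
  have hηbound : ∀ σ ∈ I, (∫ t in (0:ℝ)..1, (ηs σ t) ^ 2) ≤ F σ := by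
    intro σ hσ
    apply intervalIntegral.integral_mono_on h01
      (((zo_slice hηsc hσ).pow 2).intervalIntegrable 0 1) (hsumint σ hσ)
    intro t _
    simp only [Pi.pow_apply]
    nlinarith [sq_nonneg (‖us σ t‖), sq_nonneg (ζs σ t)]
  -- choose comparison slice via Chebyshev
  obtain ⟨a, b, hab, hlen, hsub, hcase⟩ :
      ∃ a b : ℝ, a ≤ b ∧ b - a ≤ 1 ∧ Set.Icc a b ⊆ I ∧
        ((s = a ∧ F b ≤ Ebound) ∨ (s = b ∧ F a ≤ Ebound)) := by
    rw [isBounded_iff_bddBelow_bddAbove] at hIunb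
    rcases not_and_or.mp hIunb with hbel | habv
    · obtain ⟨x, hxI, hx⟩ := not_bddBelow_iff.mp hbel (s - 1)
      have hsubL : Set.Icc (s-1) s ⊆ I := fun y hy =>
        hIint.out hxI hs ⟨hx.le.trans hy.1, hy.2⟩
      have hJsub : Set.Ioc (s-1) ((s-1)+1) ⊆ I := fun y hy =>
        hsubL ⟨hy.1.le, by linarith [hy.2]⟩
      have hintJ : IntegrableOn F (Set.Ioc (s-1) ((s-1)+1)) := hEint.mono_set hJsub
      have hJle : (∫ σ in Set.Ioc (s-1) ((s-1)+1), F σ) ≤ Ebound :=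
        le_trans (setIntegral_mono_set hEint hFae hJsub.eventuallyLE) hEn
      obtain ⟨σ, hσJ, hσF⟩ := zo_exists_small hintJ hJle
      refine ⟨σ, s, by linarith [hσJ.2], by linarith [hσJ.1], ?_, Or.inr ⟨rfl, hσF⟩⟩
      exact fun y hy => hsubL ⟨by linarith [hσJ.1, hy.1], hy.2⟩
    · obtain ⟨x, hxI, hx⟩ := not_bddAbove_iff.mp habv (s + 1)
      have hsubR : Set.Icc s (s+1) ⊆ I := fun y hy =>
        hIint.out hs hxI ⟨hy.1, hy.2.trans hx.le⟩
      have hJsub : Set.Ioc s (s+1) ⊆ I := fun y hy => hsubR ⟨hy.1.le, hy.2⟩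
      have hintJ : IntegrableOn F (Set.Ioc s (s+1)) := hEint.mono_set hJsub
      have hJle : (∫ σ in Set.Ioc s (s+1), F σ) ≤ Ebound :=
        le_trans (setIntegral_mono_set hEint hFae hJsub.eventuallyLE) hEn
      obtain ⟨σ, hσJ, hσF⟩ := zo_exists_small hintJ hJle
      refine ⟨s, σ, hσJ.1.le, by linarith [hσJ.2], ?_, Or.inl ⟨rfl, hσF⟩⟩
      exact fun y hy => hsubR ⟨hy.1, by linarith [hσJ.2, hy.2]⟩
  have haI : a ∈ I := hsub ⟨le_refl a, hab⟩
  have hbI : b ∈ I := hsub ⟨hab, le_refl b⟩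
  -- transported oscillation bound
  have hdiff : (∫ t in (0:ℝ)..1, (ζ b t - ζ a t) ^ 2) ≤ Ebound := by
    have hFint : IntervalIntegrable F volume a b := by
      rw [intervalIntegrable_iff, Set.uIoc_of_le hab]
      exact hEint.mono_set (fun y hy => hsub ⟨hy.1.le, hy.2⟩)
    have h1 := zo_key hab hlen hsub hζs hζsc (fun σ hσ => hζcont σ hσ) hFint
      (fun σ hσ => hζbound σ (hsub hσ))
    have h2 : (∫ σ in a..b, F σ) ≤ Ebound := by
      rw [intervalIntegral.integral_of_le hab]
      have hj : Set.Ioc a b ⊆ I := fun y hy => hsub ⟨hy.1.le, hy.2⟩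
      exact le_trans (setIntegral_mono_set hEint hFae hj.eventuallyLE) hEn
    linarith
  -- symmetric final computation
  have main : ∀ p q : ℝ, p ∈ I → q ∈ I →
      (∫ t in (0:ℝ)..1, (ζ p t - ζ q t) ^ 2) ≤ Ebound → F q ≤ Ebound →
      Real.sqrt (∫ t in (0:ℝ)..1, (ζ p t - ∫ t' in (0:ℝ)..1, ζ p t') ^ 2)
        ≤ 2 * Real.sqrt Ebound + Hinf := by
    intro p q hp hq hpq hFq
    set mp := ∫ t' in (0:ℝ)..1, ζ p t' with hmp
    set mq := ∫ t' in (0:ℝ)..1, ζ q t' with hmq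
    have hζpc := hζcont p hp
    have hζqc := hζcont q hq
    have e1 : (∫ t in (0:ℝ)..1, (ζ p t - mp) ^ 2)
        = ∫ t in (0:ℝ)..1, ((ζ p t - ζ q t - (mp - mq)) + (ζ q t - mq)) ^ 2 := by
      apply intervalIntegral.integral_congr; intro t _; ring
    have hmink1 := zo_minkowski h01
      (f := fun t => ζ p t - ζ q t - (mp - mq)) (g := fun t => ζ q t - mq)
      (((hζpc.sub hζqc).sub continuous_const).continuousOn)
      ((hζqc.sub continuous_const).continuousOn)
    have hmean : (∫ t in (0:ℝ)..1, (ζ p t - ζ q t - (mp - mq)) ^ 2)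
        ≤ ∫ t in (0:ℝ)..1, (ζ p t - ζ q t) ^ 2 := by
      have hmsub : (∫ r in (0:ℝ)..1, (ζ p r - ζ q r)) = mp - mq := by
        rw [intervalIntegral.integral_sub (hζpc.intervalIntegrable 0 1)
          (hζqc.intervalIntegrable 0 1)]
      have h := zo_mean_sub (h := fun t => ζ p t - ζ q t)
        ((hζpc.sub hζqc).continuousOn)
      rw [hmsub] at h
      exact h
    have ht1 : Real.sqrt (∫ t in (0:ℝ)..1, (ζ p t - ζ q t - (mp - mq)) ^ 2)
        ≤ Real.sqrt Ebound := Real.sqrt_le_sqrt (le_trans hmean hpq)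
    -- Poincaré for the q-slice
    have hpoin := zo_poincare (φ := fun t => ζ q t) (dφ := fun t => ζt q t)
      (hζt q hq) (zo_slice hζtc hq)
    have hs1 : Real.sqrt (∫ t in (0:ℝ)..1, (ζ q t - mq) ^ 2)
        ≤ Real.sqrt (∫ t in (0:ℝ)..1, (ζt q t) ^ 2) := by
      apply Real.sqrt_le_sqrt
      rw [hmq]
      exact hpoin
    have hHuc : Continuous (fun t => H (u q t)) := hHc.comp (hucont q hq)
    have hηqc : Continuous (fun t => ηs q t) := zo_slice hηsc hq
    have e2 : (∫ t in (0:ℝ)..1, (ζt q t) ^ 2)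
        = ∫ t in (0:ℝ)..1, (H (u q t) + (- ηs q t)) ^ 2 := by
      apply intervalIntegral.integral_congr; intro t _
      have := heq2 q hq t
      have e : ζt q t = H (u q t) + (- ηs q t) := by linarith
      simp only [e]
    have hmink2 := zo_minkowski h01 (f := fun t => H (u q t))
      (g := fun t => - ηs q t) hHuc.continuousOn (hηqc.neg.continuousOn)
    have hHt : Real.sqrt (∫ t in (0:ℝ)..1, (H (u q t)) ^ 2) ≤ Hinf := by
      have hle : (∫ t in (0:ℝ)..1, (H (u q t)) ^ 2) ≤ ∫ t in (0:ℝ)..1, Hinf ^ 2 := by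
        apply intervalIntegral.integral_mono_on h01
          ((hHuc.pow 2).intervalIntegrable 0 1) intervalIntegrable_const
        intro t _
        have h := hHb (u q t)
        simp only [Pi.pow_apply]
        nlinarith [abs_nonneg (H (u q t)), sq_abs (H (u q t))]
      calc Real.sqrt (∫ t in (0:ℝ)..1, (H (u q t)) ^ 2)
          ≤ Real.sqrt (∫ t in (0:ℝ)..1, Hinf ^ 2) := Real.sqrt_le_sqrt hle
        _ = Real.sqrt (Hinf ^ 2) := by
            rw [intervalIntegral.integral_const]; norm_num
        _ = Hinf := Real.sqrt_sq hHinf0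
    have hηt : Real.sqrt (∫ t in (0:ℝ)..1, (- ηs q t) ^ 2) ≤ Real.sqrt Ebound := by
      apply Real.sqrt_le_sqrt
      have e3 : (∫ t in (0:ℝ)..1, (- ηs q t) ^ 2)
          = ∫ t in (0:ℝ)..1, (ηs q t) ^ 2 := by
        apply intervalIntegral.integral_congr; intro t _; ring
      rw [e3]
      exact le_trans (hηbound q hq) hFq
    have goal1 : Real.sqrt (∫ t in (0:ℝ)..1, (ζ p t - mp) ^ 2)
        ≤ Real.sqrt (∫ t in (0:ℝ)..1, (ζ p t - ζ q t - (mp - mq)) ^ 2)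
          + Real.sqrt (∫ t in (0:ℝ)..1, (ζ q t - mq) ^ 2) := by
      rw [e1]; exact hmink1
    have goal2 : Real.sqrt (∫ t in (0:ℝ)..1, (ζ q t - mq) ^ 2)
        ≤ Hinf + Real.sqrt Ebound := by
      refine le_trans hs1 ?_
      rw [e2]
      exact le_trans hmink2 (by linarith [hHt, hηt])
    linarith [goal1, ht1, goal2]
  rcases hcase with ⟨rfl, hFb⟩ | ⟨rfl, hFa⟩
  · apply main s b hs hbI ?_ hFb
    have e : (∫ t in (0:ℝ)..1, (ζ s t - ζ b t) ^ 2)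
        = ∫ t in (0:ℝ)..1, (ζ b t - ζ s t) ^ 2 := by
      apply intervalIntegral.integral_congr; intro t _; ring
    rw [e]; exact hdiff
  · exact main s a hs haI hdiff hFa
end

section
/- Fix n ≥ 1 and let E = ℂⁿ with real inner product ⟨u,v⟩ = Re ∑ₖ uₖ·conj(vₖ). Let H : E → ℝ be C¹, let I ⊆ ℝ be an unbounded interval, let E > 0, ε > 0, L ≥ 0, and let ũ = (u, η, ζ) : I × ℝ → E × ℝ × ℝ be a smooth map, 1-periodic in the second variable t, solving the flat Floer system ∂ₛu + i·∂ₜu + η·∇H(u) = 0, ∂ₛη + ∂ₜζ − H(u) = 0, ∂ₛζ − ∂ₜη = 0, with energy 𝔼(ũ) := ∫_I ∫₀¹ (‖∂ₛu‖² + |∂ₛη|² + |∂ₛζ|²) dt ds ≤ E. Assume that for every s ∈ I with ∫₀¹ ( ‖∂ₛu(s,t)‖² + |∂ₛη(s,t)|² + |∂ₛζ(s,t)|² ) dt < ε² one has ( ∫₀¹ η(s,t)² dt )^{1/2} ≤ L. Then for every s ∈ I, ( ∫₀¹ η(s,t)² dt )^{1/2} ≤ L + E/ε. -/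
open MeasureTheory intervalIntegral

/-- Cauchy–Schwarz for interval integrals of continuous functions. -/
lemma cs_sq {a b : ℝ} (hab : a ≤ b) {p q : ℝ → ℝ}
    (hp : ContinuousOn p (Set.Icc a b)) (hq : ContinuousOn q (Set.Icc a b)) :
    (∫ t in a..b, p t * q t) ^ 2 ≤ (∫ t in a..b, p t ^ 2) * (∫ t in a..b, q t ^ 2) := by
  set A := ∫ t in a..b, p t ^ 2 with hA
  set B := ∫ t in a..b, q t ^ 2 with hB
  set C := ∫ t in a..b, p t * q t with hC
  have hpp : IntervalIntegrable (fun t => p t ^ 2) volume a b :=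
    (hp.pow 2).intervalIntegrable_of_Icc hab
  have hqq : IntervalIntegrable (fun t => q t ^ 2) volume a b :=
    (hq.pow 2).intervalIntegrable_of_Icc hab
  have hpq : IntervalIntegrable (fun t => p t * q t) volume a b :=
    (hp.mul hq).intervalIntegrable_of_Icc hab
  have key : ∀ x : ℝ, 0 ≤ A * (x * x) + (2 * C) * x + B := by
    intro x
    have h1 : (∫ t in a..b, (x * p t + q t) ^ 2) = A * (x * x) + (2 * C) * x + B := by
      have heq : ∀ t, (x * p t + q t) ^ 2
          = (x * x) * p t ^ 2 + (2 * x) * (p t * q t) + q t ^ 2 := by intro t; ring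
      rw [intervalIntegral.integral_congr (fun t _ => heq t)]
      rw [intervalIntegral.integral_add ((hpp.const_mul _).add (hpq.const_mul _)) hqq,
        intervalIntegral.integral_add (hpp.const_mul _) (hpq.const_mul _),
        intervalIntegral.integral_const_mul, intervalIntegral.integral_const_mul]
      ring
    rw [← h1]
    exact intervalIntegral.integral_nonneg hab (fun t _ => sq_nonneg _)
  have hd := discrim_le_zero key
  rw [discrim] at hd
  nlinarith [hd]

/-- A slice of a function continuous on `I ×ˢ univ` is continuous. -/
lemma slice_cont {X : Type*} [TopologicalSpace X] {F : ℝ × ℝ → X} {I : Set ℝ}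
    (h : ContinuousOn F (I ×ˢ Set.univ)) {s : ℝ} (hs : s ∈ I) :
    Continuous fun t => F (s, t) := by
  rw [← continuousOn_univ]
  exact h.comp (continuous_const.prodMk continuous_id).continuousOn
    (fun t _ => ⟨hs, trivial⟩)

/-- Quantitative bound on the pointwise difference via Cauchy–Schwarz and FTC. -/
lemma diff_sq_bound (I : Set ℝ) (η ηs : ℝ → ℝ → ℝ)
    (hηs : ∀ s ∈ I, ∀ t, HasDerivAt (fun s' => η s' t) (ηs s t) s)
    (hηsc : ContinuousOn (fun p : ℝ × ℝ => ηs p.1 p.2) (I ×ˢ Set.univ))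
    {a b : ℝ} (hab : a ≤ b) (hsub : Set.Icc a b ⊆ I) (t : ℝ) :
    (η b t - η a t) ^ 2 ≤ (b - a) * ∫ σ in a..b, (ηs σ t) ^ 2 := by
  have hslice : ContinuousOn (fun σ => ηs σ t) (Set.Icc a b) := by
    have heq : (fun σ => ηs σ t) = (fun p : ℝ × ℝ => ηs p.1 p.2) ∘ (fun σ => (σ, t)) := rfl
    rw [heq]
    exact hηsc.comp ((continuous_id.prodMk continuous_const).continuousOn)
      (fun σ hσ => ⟨hsub hσ, trivial⟩)
  have hftc : η b t - η a t = ∫ σ in a..b, ηs σ t := by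
    refine (intervalIntegral.integral_eq_sub_of_hasDerivAt (f := fun σ => η σ t) ?_ ?_).symm
    · intro σ hσ
      rw [Set.uIcc_of_le hab] at hσ
      exact hηs σ (hsub hσ) t
    · exact hslice.intervalIntegrable_of_Icc hab
  have h := cs_sq hab hslice (continuousOn_const (c := (1:ℝ)))
  simp only [mul_one, one_pow] at h
  rw [intervalIntegral.integral_const, smul_eq_mul, mul_one] at h
  rw [hftc]
  linarith [h]

/-- The `L²(0,1)` distance of the `η`-loops at the two ends of `[a,b]` is bounded by
`(b-a)` times the integral of any majorant of the `t`-energy density. -/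
lemma D_le (I : Set ℝ) (η ηs : ℝ → ℝ → ℝ)
    (hηs : ∀ s ∈ I, ∀ t, HasDerivAt (fun s' => η s' t) (ηs s t) s)
    (hηsc : ContinuousOn (fun p : ℝ × ℝ => ηs p.1 p.2) (I ×ˢ Set.univ))
    {a b : ℝ} (hab : a ≤ b) (hsub : Set.Icc a b ⊆ I)
    (hca : Continuous (fun t => η a t)) (hcb : Continuous (fun t => η b t))
    (f : ℝ → ℝ) (hfint : IntervalIntegrable f volume a b)
    (hfle : ∀ σ ∈ Set.Icc a b, (∫ t in (0:ℝ)..1, (ηs σ t) ^ 2) ≤ f σ) :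
    (∫ t in (0:ℝ)..1, (η b t - η a t) ^ 2)
      ≤ (b - a) * ∫ σ in a..b, f σ := by
  have hrect : (Set.Icc a b ×ˢ Set.Icc (0:ℝ) 1 : Set (ℝ × ℝ)) ⊆ I ×ˢ Set.univ := by
    intro p hp
    exact ⟨hsub hp.1, trivial⟩
  have hW : ContinuousOn (fun p : ℝ × ℝ => (ηs p.1 p.2) ^ 2)
      (Set.Icc a b ×ˢ Set.Icc (0:ℝ) 1) := (hηsc.mono hrect).pow 2
  have hWint : IntegrableOn (fun p : ℝ × ℝ => (ηs p.1 p.2) ^ 2)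
      (Set.Icc a b ×ˢ Set.Icc (0:ℝ) 1) (volume.prod volume) :=
    hW.integrableOn_compact (isCompact_Icc.prod isCompact_Icc)
  have hWint' : Integrable (fun p : ℝ × ℝ => (ηs p.1 p.2) ^ 2)
      ((volume.restrict (Set.Ioc a b)).prod (volume.restrict (Set.Ioc (0:ℝ) 1))) := by
    rw [Measure.prod_restrict]
    exact hWint.mono_set (Set.prod_mono Set.Ioc_subset_Icc_self Set.Ioc_subset_Icc_self)
  have hinner : Integrable (fun t => ∫ σ, (ηs σ t) ^ 2 ∂(volume.restrict (Set.Ioc a b)))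
      (volume.restrict (Set.Ioc (0:ℝ) 1)) := hWint'.integral_prod_right
  have hinner' : IntervalIntegrable (fun t => ∫ σ in a..b, (ηs σ t) ^ 2) volume 0 1 := by
    rw [intervalIntegrable_iff_integrableOn_Ioc_of_le (by norm_num)]
    have heq : (fun t => ∫ σ in a..b, (ηs σ t) ^ 2)
        = (fun t => ∫ σ in Set.Ioc a b, (ηs σ t) ^ 2) := by
      funext t; rw [intervalIntegral.integral_of_le hab]
    rw [heq]
    exact hinner
  have houter : Integrable (fun σ => ∫ t, (ηs σ t) ^ 2 ∂(volume.restrict (Set.Ioc (0:ℝ) 1)))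
      (volume.restrict (Set.Ioc a b)) := hWint'.integral_prod_left
  have houter' : IntervalIntegrable (fun σ => ∫ t in (0:ℝ)..1, (ηs σ t) ^ 2) volume a b := by
    rw [intervalIntegrable_iff_integrableOn_Ioc_of_le hab]
    have heq : (fun σ => ∫ t in (0:ℝ)..1, (ηs σ t) ^ 2)
        = (fun σ => ∫ t in Set.Ioc (0:ℝ) 1, (ηs σ t) ^ 2) := by
      funext σ; rw [intervalIntegral.integral_of_le (by norm_num : (0:ℝ) ≤ 1)]
    rw [heq]
    exact houter
  have hstep1 : (∫ t in (0:ℝ)..1, (η b t - η a t) ^ 2)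
      ≤ ∫ t in (0:ℝ)..1, (b - a) * ∫ σ in a..b, (ηs σ t) ^ 2 := by
    apply intervalIntegral.integral_mono_on (by norm_num)
    · exact ((hcb.sub hca).pow 2).intervalIntegrable 0 1
    · exact hinner'.const_mul _
    · intro t _
      exact diff_sq_bound I η ηs hηs hηsc hab hsub t
  have hswap : (∫ t in (0:ℝ)..1, ∫ σ in a..b, (ηs σ t) ^ 2)
      = ∫ σ in a..b, (∫ t in (0:ℝ)..1, (ηs σ t) ^ 2) := by
    rw [intervalIntegral.integral_of_le hab,
      intervalIntegral.integral_of_le (by norm_num : (0:ℝ) ≤ 1)]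
    have h1 : ∀ t, (∫ σ in a..b, (ηs σ t) ^ 2) = ∫ σ in Set.Ioc a b, (ηs σ t) ^ 2 := by
      intro t; rw [intervalIntegral.integral_of_le hab]
    have h2 : ∀ σ, (∫ t in (0:ℝ)..1, (ηs σ t) ^ 2) = ∫ t in Set.Ioc (0:ℝ) 1, (ηs σ t) ^ 2 := by
      intro σ; rw [intervalIntegral.integral_of_le (by norm_num : (0:ℝ) ≤ 1)]
    simp_rw [h1, h2]
    exact (MeasureTheory.integral_integral_swap hWint').symm
  have hmono2 : (∫ σ in a..b, (∫ t in (0:ℝ)..1, (ηs σ t) ^ 2)) ≤ ∫ σ in a..b, f σ :=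
    intervalIntegral.integral_mono_on hab houter' hfint hfle
  calc (∫ t in (0:ℝ)..1, (η b t - η a t) ^ 2)
      ≤ ∫ t in (0:ℝ)..1, (b - a) * ∫ σ in a..b, (ηs σ t) ^ 2 := hstep1
    _ = (b - a) * ∫ t in (0:ℝ)..1, ∫ σ in a..b, (ηs σ t) ^ 2 := by
        rw [intervalIntegral.integral_const_mul]
    _ = (b - a) * ∫ σ in a..b, (∫ t in (0:ℝ)..1, (ηs σ t) ^ 2) := by rw [hswap]
    _ ≤ (b - a) * ∫ σ in a..b, f σ := by
        apply mul_le_mul_of_nonneg_left hmono2 (by linarith)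

set_option maxHeartbeats 1000000 in
/-- Lemma 3.4 of the paper (flat model, with an explicit quantitative threshold):
if the `L²(𝕋)` bound `‖η(s,·)‖ ≤ L` holds at every `s ∈ I` where the action
gradient is smaller than `ε`, then `‖η(s,·)‖ ≤ L + E/ε` holds for every `s ∈ I`. -/
theorem eta_bound_propagates
    (n : ℕ) (hn : 1 ≤ n)
    (H : EuclideanSpace ℂ (Fin n) → ℝ)
    (g : EuclideanSpace ℂ (Fin n) → EuclideanSpace ℂ (Fin n))
    (hH : ∀ x, HasFDerivAt H (realInnerCLM (g x)) x)
    (hg : Continuous g)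
    (I : Set ℝ) (hIint : I.OrdConnected) (hIunb : ¬ Bornology.IsBounded I)
    (Ebound : ℝ) (hE : 0 < Ebound) (ε : ℝ) (hε : 0 < ε) (L : ℝ) (hL : 0 ≤ L)
    (u : ℝ → ℝ → EuclideanSpace ℂ (Fin n))
    (us ut : ℝ → ℝ → EuclideanSpace ℂ (Fin n))
    (η ζ ηs ηt ζs ζt : ℝ → ℝ → ℝ)
    -- partial derivatives
    (hus : ∀ s ∈ I, ∀ t, HasDerivAt (fun s' => u s' t) (us s t) s)
    (hut : ∀ s ∈ I, ∀ t, HasDerivAt (fun t' => u s t') (ut s t) t)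
    (hηs : ∀ s ∈ I, ∀ t, HasDerivAt (fun s' => η s' t) (ηs s t) s)
    (hηt : ∀ s ∈ I, ∀ t, HasDerivAt (fun t' => η s t') (ηt s t) t)
    (hζs : ∀ s ∈ I, ∀ t, HasDerivAt (fun s' => ζ s' t) (ζs s t) s)
    (hζt : ∀ s ∈ I, ∀ t, HasDerivAt (fun t' => ζ s t') (ζt s t) t)
    -- smoothness of the derivative fields
    (husc : ContinuousOn (fun p : ℝ × ℝ => us p.1 p.2) (I ×ˢ Set.univ))
    (hηsc : ContinuousOn (fun p : ℝ × ℝ => ηs p.1 p.2) (I ×ˢ Set.univ))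
    (hζsc : ContinuousOn (fun p : ℝ × ℝ => ζs p.1 p.2) (I ×ˢ Set.univ))
    -- 1-periodicity in t
    (huper : ∀ s t, u s (t + 1) = u s t)
    (hηper : ∀ s t, η s (t + 1) = η s t)
    (hζper : ∀ s t, ζ s (t + 1) = ζ s t)
    -- the flat Floer system
    (heq1 : ∀ s ∈ I, ∀ t, us s t + Complex.I • ut s t + η s t • g (u s t) = 0)
    (heq2 : ∀ s ∈ I, ∀ t, ηs s t + ζt s t - H (u s t) = 0)
    (heq3 : ∀ s ∈ I, ∀ t, ζs s t - ηt s t = 0)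
    -- finite energy, bounded by Ebound
    (hEint : IntegrableOn
      (fun s => ∫ t in (0:ℝ)..1, (‖us s t‖ ^ 2 + (ηs s t) ^ 2 + (ζs s t) ^ 2)) I)
    (hEn : (∫ s in I, ∫ t in (0:ℝ)..1,
        (‖us s t‖ ^ 2 + (ηs s t) ^ 2 + (ζs s t) ^ 2)) ≤ Ebound)
    -- the bound L at loops with small gradient
    (hthresh : ∀ s ∈ I,
      (∫ t in (0:ℝ)..1, (‖us s t‖ ^ 2 + (ηs s t) ^ 2 + (ζs s t) ^ 2)) < ε ^ 2 →
      Real.sqrt (∫ t in (0:ℝ)..1, (η s t) ^ 2) ≤ L) :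
    ∀ s ∈ I, Real.sqrt (∫ t in (0:ℝ)..1, (η s t) ^ 2) ≤ L + Ebound / ε := by
  intro s₀ hs₀
  set f : ℝ → ℝ :=
    fun s => ∫ t in (0:ℝ)..1, (‖us s t‖ ^ 2 + (ηs s t) ^ 2 + (ζs s t) ^ 2) with hfdef
  have hf0 : ∀ s, 0 ≤ f s := fun s =>
    intervalIntegral.integral_nonneg (by norm_num) (fun t _ => by positivity)
  refine le_of_forall_pos_le_add fun δ hδ => ?_
  set r : ℝ := Ebound / ε ^ 2 + δ ^ 2 / Ebound with hrdef
  have hr0 : 0 < r := by positivity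
  -- a far away point of I
  obtain ⟨s₁, hs₁I, hs₁⟩ : ∃ s₁ ∈ I, |s₀| + r < |s₁| := by
    by_contra hcon
    push_neg at hcon
    exact hIunb (isBounded_iff_forall_norm_le.2 ⟨|s₀| + r,
      fun x hx => by simpa [Real.norm_eq_abs] using hcon x hx⟩)
  -- an interval of length r inside I with s₀ as an endpoint
  obtain ⟨a, b, hab, hlen, hsubI, hend⟩ :
      ∃ a b : ℝ, a ≤ b ∧ b - a = r ∧ Set.Icc a b ⊆ I ∧ (s₀ = a ∨ s₀ = b) := by
    rcases le_total s₀ s₁ with hcase | hcase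
    · have h1 : s₀ + r < s₁ := by
        rcases abs_cases s₁ with ⟨h, _⟩ | ⟨h, _⟩ <;>
          rcases abs_cases s₀ with ⟨h', _⟩ | ⟨h', _⟩ <;> linarith
      exact ⟨s₀, s₀ + r, by linarith, by ring,
        (Set.Icc_subset_Icc_right h1.le).trans (hIint.out hs₀ hs₁I), Or.inl rfl⟩
    · have h1 : s₁ < s₀ - r := by
        rcases abs_cases s₁ with ⟨h, _⟩ | ⟨h, _⟩ <;>
          rcases abs_cases s₀ with ⟨h', _⟩ | ⟨h', _⟩ <;> linarith
      exact ⟨s₀ - r, s₀, by linarith, by ring,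
        (Set.Icc_subset_Icc_left h1.le).trans (hIint.out hs₁I hs₀), Or.inr rfl⟩
  have hs₀ab : s₀ ∈ Set.Icc a b := by
    rcases hend with rfl | rfl
    · exact Set.left_mem_Icc.2 hab
    · exact Set.right_mem_Icc.2 hab
  -- a good point in [a,b]
  obtain ⟨sg, hsgab, hsgf⟩ : ∃ sg ∈ Set.Icc a b, f sg < ε ^ 2 := by
    by_contra hcon
    push_neg at hcon
    have hfint : IntegrableOn f (Set.Icc a b) := hEint.mono_set hsubI
    have hconst : IntegrableOn (fun _ : ℝ => ε ^ 2) (Set.Icc a b) :=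
      integrableOn_const (by rw [Real.volume_Icc]; exact ENNReal.ofReal_ne_top)
    have h1 : (∫ _ in Set.Icc a b, ε ^ 2) ≤ ∫ σ in Set.Icc a b, f σ :=
      setIntegral_mono_on hconst hfint measurableSet_Icc (fun x hx => hcon x hx)
    rw [setIntegral_const, measureReal_def, Real.volume_Icc, smul_eq_mul,
      ENNReal.toReal_ofReal (by linarith)] at h1
    have h2 : (∫ σ in Set.Icc a b, f σ) ≤ ∫ σ in I, f σ :=
      setIntegral_mono_set hEint (Filter.Eventually.of_forall hf0)
        (Filter.Eventually.of_forall hsubI)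
    have h3 : Ebound < (b - a) * ε ^ 2 := by
      rw [hlen, hrdef]
      have : (Ebound / ε ^ 2 + δ ^ 2 / Ebound) * ε ^ 2
          = Ebound + δ ^ 2 * ε ^ 2 / Ebound := by
        field_simp
      rw [this]
      have : 0 < δ ^ 2 * ε ^ 2 / Ebound := by positivity
      linarith
    linarith
  have hsgI : sg ∈ I := hsubI hsgab
  have hΦg : Real.sqrt (∫ t in (0:ℝ)..1, (η sg t) ^ 2) ≤ L := hthresh sg hsgI hsgf
  -- ordered endpoints of the segment from sg to s₀
  set a' : ℝ := min sg s₀ with ha'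
  set b' : ℝ := max sg s₀ with hb'
  have ha'b' : a' ≤ b' := min_le_max
  have hsub' : Set.Icc a' b' ⊆ I := fun x hx =>
    hsubI ⟨le_trans (le_min hsgab.1 hs₀ab.1) hx.1, le_trans hx.2 (max_le hsgab.2 hs₀ab.2)⟩
  have hlen' : b' - a' ≤ r := by
    have h1 : a ≤ a' := le_min hsgab.1 hs₀ab.1
    have h2 : b' ≤ b := max_le hsgab.2 hs₀ab.2
    linarith
  -- continuity in t of the loops
  have hηcont : ∀ s ∈ I, Continuous fun t => η s t := fun s hs =>
    continuous_iff_continuousAt.2 fun t => (hηt s hs t).continuousAt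
  have ha'I : a' ∈ I := hsub' (Set.left_mem_Icc.2 ha'b')
  have hb'I : b' ∈ I := hsub' (Set.right_mem_Icc.2 ha'b')
  -- the inner energy bound
  have hfle : ∀ σ ∈ Set.Icc a' b', (∫ t in (0:ℝ)..1, (ηs σ t) ^ 2) ≤ f σ := by
    intro σ hσ
    have hσI : σ ∈ I := hsub' hσ
    apply intervalIntegral.integral_mono_on (by norm_num)
    · exact ((slice_cont hηsc hσI).pow 2).intervalIntegrable 0 1
    · exact (((((slice_cont husc hσI).norm.pow 2)).add
        ((slice_cont hηsc hσI).pow 2)).add ((slice_cont hζsc hσI).pow 2)).intervalIntegrable 0 1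
    · intro t _
      have h1 := sq_nonneg ‖us σ t‖
      have h2 := sq_nonneg (ζs σ t)
      linarith
  have hfint' : IntervalIntegrable f volume a' b' := by
    rw [intervalIntegrable_iff_integrableOn_Ioc_of_le ha'b']
    exact (hEint.mono_set hsub').mono_set Set.Ioc_subset_Icc_self
  -- the key distance estimate
  have hD : (∫ t in (0:ℝ)..1, (η b' t - η a' t) ^ 2) ≤ (b' - a') * ∫ σ in a'..b', f σ :=
    D_le I η ηs hηs hηsc ha'b' hsub' (hηcont a' ha'I) (hηcont b' hb'I) f hfint' hfle
  have hIf : (∫ σ in a'..b', f σ) ≤ Ebound := by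
    rw [intervalIntegral.integral_of_le ha'b']
    have h2 : (∫ σ in Set.Ioc a' b', f σ) ≤ ∫ σ in I, f σ :=
      setIntegral_mono_set hEint (Filter.Eventually.of_forall hf0)
        (Filter.Eventually.of_forall (fun x hx => hsub' (Set.Ioc_subset_Icc_self hx)))
    linarith
  have hIf0 : 0 ≤ ∫ σ in a'..b', f σ :=
    intervalIntegral.integral_nonneg ha'b' (fun σ _ => hf0 σ)
  have hDr : (∫ t in (0:ℝ)..1, (η b' t - η a' t) ^ 2) ≤ r * Ebound := by
    calc (∫ t in (0:ℝ)..1, (η b' t - η a' t) ^ 2)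
        ≤ (b' - a') * ∫ σ in a'..b', f σ := hD
      _ ≤ r * Ebound := mul_le_mul hlen' hIf hIf0 hr0.le
  -- rewrite the difference as s₀ minus sg
  have hDeq : (∫ t in (0:ℝ)..1, (η b' t - η a' t) ^ 2)
      = ∫ t in (0:ℝ)..1, (η s₀ t - η sg t) ^ 2 := by
    rcases le_total sg s₀ with h | h
    · rw [ha', hb', min_eq_left h, max_eq_right h]
    · rw [ha', hb', min_eq_right h, max_eq_left h]
      exact intervalIntegral.integral_congr (fun t _ => by ring)
  set Dv : ℝ := ∫ t in (0:ℝ)..1, (η s₀ t - η sg t) ^ 2 with hDv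
  have hDv0 : 0 ≤ Dv := intervalIntegral.integral_nonneg (by norm_num) (fun t _ => sq_nonneg _)
  have hDvr : Dv ≤ r * Ebound := by rw [← hDeq]; exact hDr
  -- Minkowski : sqrt(∫ η s₀ ²) ≤ sqrt(∫ η sg ²) + sqrt Dv
  set A : ℝ := ∫ t in (0:ℝ)..1, (η sg t) ^ 2 with hA
  have hA0 : 0 ≤ A := intervalIntegral.integral_nonneg (by norm_num) (fun t _ => sq_nonneg _)
  have hcg : Continuous fun t => η sg t := hηcont sg hsgI
  have hc0 : Continuous fun t => η s₀ t := hηcont s₀ hs₀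
  have hcd : Continuous fun t => η s₀ t - η sg t := hc0.sub hcg
  have hexp : (∫ t in (0:ℝ)..1, (η s₀ t) ^ 2)
      = A + 2 * (∫ t in (0:ℝ)..1, η sg t * (η s₀ t - η sg t)) + Dv := by
    have heq : ∀ t, (η s₀ t) ^ 2
        = (η sg t) ^ 2 + 2 * (η sg t * (η s₀ t - η sg t)) + (η s₀ t - η sg t) ^ 2 := by
      intro t; ring
    rw [intervalIntegral.integral_congr (fun t _ => heq t)]
    rw [intervalIntegral.integral_add (f := fun t => (η sg t) ^ 2 + 2 * (η sg t * (η s₀ t - η sg t)))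
        (g := fun t => (η s₀ t - η sg t) ^ 2) (((hcg.pow 2).intervalIntegrable 0 1).add
        (((hcg.mul hcd).intervalIntegrable 0 1).const_mul 2))
        ((hcd.pow 2).intervalIntegrable 0 1),
      intervalIntegral.integral_add (f := fun t => (η sg t) ^ 2)
          (g := fun t => 2 * (η sg t * (η s₀ t - η sg t))) ((hcg.pow 2).intervalIntegrable 0 1)
        (((hcg.mul hcd).intervalIntegrable 0 1).const_mul 2),
      intervalIntegral.integral_const_mul]
  have hcs : (∫ t in (0:ℝ)..1, η sg t * (η s₀ t - η sg t))
      ≤ Real.sqrt A * Real.sqrt Dv := by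
    have h := cs_sq (by norm_num : (0:ℝ) ≤ 1) hcg.continuousOn hcd.continuousOn
    have h2 : (∫ t in (0:ℝ)..1, η sg t * (η s₀ t - η sg t))
        ≤ |∫ t in (0:ℝ)..1, η sg t * (η s₀ t - η sg t)| := le_abs_self _
    calc (∫ t in (0:ℝ)..1, η sg t * (η s₀ t - η sg t))
        ≤ |∫ t in (0:ℝ)..1, η sg t * (η s₀ t - η sg t)| := h2
      _ = Real.sqrt ((∫ t in (0:ℝ)..1, η sg t * (η s₀ t - η sg t)) ^ 2) :=
          (Real.sqrt_sq_eq_abs _).symm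
      _ ≤ Real.sqrt (A * Dv) := Real.sqrt_le_sqrt (by rw [hA, hDv]; exact h)
      _ = Real.sqrt A * Real.sqrt Dv := Real.sqrt_mul hA0 _
  have hGle : (∫ t in (0:ℝ)..1, (η s₀ t) ^ 2) ≤ (Real.sqrt A + Real.sqrt Dv) ^ 2 := by
    rw [hexp]
    have hsqA : Real.sqrt A ^ 2 = A := Real.sq_sqrt hA0
    have hsqD : Real.sqrt Dv ^ 2 = Dv := Real.sq_sqrt hDv0
    nlinarith [hcs]
  have hsqrtG : Real.sqrt (∫ t in (0:ℝ)..1, (η s₀ t) ^ 2)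
      ≤ Real.sqrt A + Real.sqrt Dv := by
    calc Real.sqrt (∫ t in (0:ℝ)..1, (η s₀ t) ^ 2)
        ≤ Real.sqrt ((Real.sqrt A + Real.sqrt Dv) ^ 2) := Real.sqrt_le_sqrt hGle
      _ = Real.sqrt A + Real.sqrt Dv := by
          rw [Real.sqrt_sq (by positivity)]
  -- final numeric bound
  have hrE : r * Ebound ≤ (Ebound / ε + δ) ^ 2 := by
    rw [hrdef]
    have h1 : (Ebound / ε ^ 2 + δ ^ 2 / Ebound) * Ebound
        = (Ebound / ε) ^ 2 + δ ^ 2 := by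
      field_simp
    rw [h1]
    nlinarith [mul_pos (div_pos hE hε) hδ]
  have hsqrtD : Real.sqrt Dv ≤ Ebound / ε + δ := by
    calc Real.sqrt Dv ≤ Real.sqrt ((Ebound / ε + δ) ^ 2) :=
          Real.sqrt_le_sqrt (le_trans hDvr hrE)
      _ = Ebound / ε + δ := Real.sqrt_sq (by positivity)
  calc Real.sqrt (∫ t in (0:ℝ)..1, (η s₀ t) ^ 2)
      ≤ Real.sqrt A + Real.sqrt Dv := hsqrtG
    _ ≤ L + (Ebound / ε + δ) := add_le_add hΦg hsqrtD
    _ = L + Ebound / ε + δ := by ring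
end
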